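/- arXiv:1303.4684 — 5 statements merged into one kernel-verified Lean document; each statement's English description precedes it below -/
import Mathlib

section
/- Let C ⊆ [0,1] be a nowhere dense set, let f ∈ H⁺ and let ε > 0. Then there exists g ∈ H⁺ such that ‖g − f‖ < ε (supremum norm) and the set g(C) contains no 3-term arithmetic progression with step d ≥ ε, i.e., there are no x ∈ ℝ and d ≥ ε with x, x+d, x+2d ∈ g(C). -/
open Set

noncomputable section

/-- `A ⊆ ℝ` is *FAP* (free of arithmetic progressions): it contains no 3-term AP. -/
def FAP (A : Set ℝ) : Prop :=
  ¬ ∃ x d : ℝ, 0 < d ∧ x ∈ A ∧ x + d ∈ A ∧ x + 2 * d ∈ A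

/-- `H⁺`: the strictly increasing homeomorphisms of `[0,1]` onto itself, realized as the
subset of `C([0,1], ℝ)` (carrying the sup-norm topology) consisting of the strictly
increasing continuous functions fixing `0` and `1` (such a map is automatically a
homeomorphism of `[0,1]` onto itself). -/
def Hplus : Set C(Set.Icc (0:ℝ) 1, ℝ) :=
  {f | StrictMono f ∧ f ⟨0, by norm_num⟩ = 0 ∧ f ⟨1, by norm_num⟩ = 1}

/-- The image in `ℝ` of a set `C ⊆ [0,1]` under `f : C([0,1], ℝ)`. -/
def imgC (f : C(Set.Icc (0:ℝ) 1, ℝ)) (C : Set ℝ) : Set ℝ :=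
  ⇑f '' (Subtype.val ⁻¹' C)

/-- `H_ε(C)`: the set of `φ ∈ H⁺` such that `φ(C)` has no 3-term AP of step `d ≥ ε`. -/
def Heps (C : Set ℝ) (ε : ℝ) : Set ↥Hplus :=
  {φ | ¬ ∃ x d : ℝ, ε ≤ d ∧ x ∈ imgC φ.1 C ∧ x + d ∈ imgC φ.1 C ∧ x + 2 * d ∈ imgC φ.1 C}

set_option maxHeartbeats 1000000
namespace APaux



/-- piecewise linear interpolation through points (p j, s j - s 0), j = 0..m -/
noncomputable def PL (m : ℕ) (p s : ℕ → ℝ) (x : ℝ) : ℝ :=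
  ∑ j ∈ Finset.range m, (s (j+1) - s j)/(p (j+1) - p j) * (min x (p (j+1)) - min x (p j))

lemma PL_continuous (m : ℕ) (p s : ℕ → ℝ) : Continuous (PL m p s) := by
  apply continuous_finset_sum
  intro j _
  exact continuous_const.mul ((continuous_id.min continuous_const).sub
    (continuous_id.min continuous_const))

lemma minsub_mono {a b : ℝ} (hab : a ≤ b) {x y : ℝ} (hxy : x ≤ y) :
    min x b - min x a ≤ min y b - min y a := by
  rcases le_total x a with h | h <;> rcases le_total y a with h' | h' <;>
    rcases le_total x b with h2 | h2 <;> rcases le_total y b with h3 | h3 <;>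
    simp [min_def] <;> split_ifs <;> linarith

variable {m : ℕ} {p s : ℕ → ℝ}

lemma PL_mono (hp : ∀ j < m, p j < p (j+1)) (hs : ∀ j < m, s j < s (j+1)) :
    Monotone (PL m p s) := by
  intro x y hxy
  apply Finset.sum_le_sum
  intro j hj
  rw [Finset.mem_range] at hj
  have h1 := hp j hj
  have h2 := hs j hj
  have hc : 0 ≤ (s (j+1) - s j)/(p (j+1) - p j) :=
    div_nonneg (by linarith) (by linarith)
  exact mul_le_mul_of_nonneg_left (minsub_mono h1.le hxy) hc

lemma p_mono (hp : ∀ j < m, p j < p (j+1)) :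
    ∀ i j, i ≤ j → j ≤ m → p i ≤ p j := by
  intro i j hij hjm
  induction j with
  | zero => simp_all
  | succ k ih =>
    rcases Nat.lt_or_ge i (k+1) with h | h
    · exact le_trans (ih (by omega) (by omega)) (hp k (by omega)).le
    · have : i = k+1 := by omega
      simp [this]

lemma PL_at (hp : ∀ j < m, p j < p (j+1)) {k : ℕ} (hk : k ≤ m) :
    PL m p s (p k) = s k - s 0 := by
  have hmono := p_mono hp
  unfold PL
  rw [← Finset.sum_range_add_sum_Ico _ hk]
  have h1 : ∑ j ∈ Finset.range k, (s (j+1) - s j)/(p (j+1) - p j) *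
      (min (p k) (p (j+1)) - min (p k) (p j)) = ∑ j ∈ Finset.range k, (s (j+1) - s j) := by
    apply Finset.sum_congr rfl
    intro j hj
    rw [Finset.mem_range] at hj
    have e1 : min (p k) (p (j+1)) = p (j+1) := min_eq_right (hmono (j+1) k (by omega) hk)
    have e2 : min (p k) (p j) = p j := min_eq_right (hmono j k (by omega) hk)
    rw [e1, e2]
    field_simp [ne_of_gt (sub_pos.mpr (hp j (by omega)))]
  have h2 : ∑ j ∈ Finset.Ico k m, (s (j+1) - s j)/(p (j+1) - p j) *
      (min (p k) (p (j+1)) - min (p k) (p j)) = 0 := by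
    apply Finset.sum_eq_zero
    intro j hj
    rw [Finset.mem_Ico] at hj
    have e1 : min (p k) (p (j+1)) = p k := min_eq_left (hmono k (j+1) (by omega) (by omega))
    have e2 : min (p k) (p j) = p k := min_eq_left (hmono k j (by omega) (by omega))
    rw [e1, e2]
    ring
  rw [h1, h2, Finset.sum_range_sub (fun j => s j)]
  ring

/-- find the segment containing x -/
lemma exists_segment (hp : ∀ j < m, p j < p (j+1)) (hm : 0 < m) {x : ℝ}
    (hx0 : p 0 ≤ x) (hxm : x ≤ p m) : ∃ k < m, p k ≤ x ∧ x ≤ p (k+1) := by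
  classical
  set j := Nat.findGreatest (fun j => p j ≤ x) m with hj
  have hPj : p j ≤ x := Nat.findGreatest_spec (P := fun j => p j ≤ x) (Nat.zero_le m) hx0
  rcases Nat.lt_or_ge j m with h | h
  · refine ⟨j, h, hPj, ?_⟩
    by_contra hc
    push_neg at hc
    exact absurd hc.le (Nat.findGreatest_is_greatest (Nat.lt_succ_self j) (by omega))
  · have hjm : j = m := le_antisymm (Nat.findGreatest_le m) h
    refine ⟨m - 1, by omega, ?_, ?_⟩
    · exact le_trans (p_mono hp (m-1) m (by omega) le_rfl) (hjm ▸ hPj)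
    · have : m - 1 + 1 = m := by omega
      rw [this]; exact hxm

lemma exists_segment_lt (hp : ∀ j < m, p j < p (j+1)) {x : ℝ}
    (hx0 : p 0 ≤ x) (hxm : x < p m) : ∃ k < m, p k ≤ x ∧ x < p (k+1) := by
  classical
  set j := Nat.findGreatest (fun j => p j ≤ x) m with hj
  have hPj : p j ≤ x := Nat.findGreatest_spec (P := fun j => p j ≤ x) (Nat.zero_le m) hx0
  rcases Nat.lt_or_ge j m with h | h
  · refine ⟨j, h, hPj, ?_⟩
    by_contra hc
    push_neg at hc
    exact absurd hc (Nat.findGreatest_is_greatest (Nat.lt_succ_self j) (by omega))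
  · have hjm : j = m := le_antisymm (Nat.findGreatest_le m) h
    rw [hjm] at hPj
    exact absurd hPj (not_le.mpr hxm)

lemma PL_strictMonoOn (hp : ∀ j < m, p j < p (j+1)) (hs : ∀ j < m, s j < s (j+1))
    (hm : 0 < m) : StrictMonoOn (PL m p s) (Icc (p 0) (p m)) := by
  intro x hx y hy hxy
  obtain ⟨k, hk, hk1, hk2⟩ := exists_segment_lt hp hx.1 (lt_of_lt_of_le hxy hy.2)
  unfold PL
  apply Finset.sum_lt_sum
  · intro j hj
    rw [Finset.mem_range] at hj
    have h1 := hp j hj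
    have h2 := hs j hj
    have hc : 0 ≤ (s (j+1) - s j)/(p (j+1) - p j) :=
      div_nonneg (by linarith) (by linarith)
    exact mul_le_mul_of_nonneg_left (minsub_mono h1.le hxy.le) hc
  · refine ⟨k, Finset.mem_range.mpr hk, ?_⟩
    have h1 := hp k hk
    have h2 := hs k hk
    have hc : 0 < (s (k+1) - s k)/(p (k+1) - p k) :=
      div_pos (by linarith) (by linarith)
    apply mul_lt_mul_of_pos_left _ hc
    have e1 : min x (p (k+1)) = x := min_eq_left hk2.le
    have e2 : min x (p k) = p k := min_eq_right hk1
    have e3 : min y (p k) = p k := min_eq_right (le_trans hk1 hxy.le)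
    rw [e1, e2, e3]
    have : x < min y (p (k+1)) := lt_min hxy hk2
    linarith



/-- the target points -/
noncomputable def tt (n : ℕ) : ℕ → ℝ := fun i =>
  (i : ℝ)/n + (1/(8*n*4^n)) * ((4:ℝ)^i - 1 - (((4:ℝ)^n - 1)/n) * i)

/-- the half-width of the small intervals -/
noncomputable def dl (n : ℕ) : ℝ := 1/(64*n*4^n)

variable {n : ℕ} (hn : 1 ≤ n)
include hn

lemma dl_pos : 0 < dl n := by
  have : (0:ℝ) < n := by exact_mod_cast hn
  unfold dl; positivity

omit hn in
lemma tt_zero : tt n 0 = 0 := by simp [tt]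

lemma tt_n : tt n n = 1 := by
  have h0 : (n:ℝ) ≠ 0 := by positivity
  unfold tt
  field_simp
  ring

lemma tt_spacing {i : ℕ} (hi : i < n) :
    1/(2*n) ≤ tt n (i+1) - tt n i ∧ tt n (i+1) - tt n i ≤ 2/n := by
  have hn' : (1:ℝ) ≤ n := by exact_mod_cast hn
  have hn0 : (0:ℝ) < n := by linarith
  have hM1 : (1:ℝ) ≤ 4^n := one_le_pow₀ (by norm_num)
  set M : ℝ := (4:ℝ)^n with hM
  set τ : ℝ := 1/(8*n*M) with hτ
  set ν : ℝ := 1/(n:ℝ) with hν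
  have hν0 : 0 < ν := by rw [hν]; positivity
  have hτpos : 0 < τ := by rw [hτ]; positivity
  have hne0 : (n:ℝ) ≠ 0 := ne_of_gt hn0
  have hτM : τ * M = ν/8 := by rw [hτ, hν]; field_simp
  have h4i : (1:ℝ) ≤ 4^i ∧ (4:ℝ)^i ≤ M :=
    ⟨one_le_pow₀ (by norm_num), pow_le_pow_right₀ (by norm_num) (by omega)⟩
  have hsp : tt n (i+1) - tt n i = ν + τ*(3*(4:ℝ)^i) - τ*((M-1)/n) := by
    have h4ne : (4:ℝ)^n ≠ 0 := by positivity
    simp only [tt, ← hM, ← hτ, ← hν]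
    rw [hν, hτ, hM]
    push_cast
    field_simp
    ring
  have hc1 : (M-1)/n ≤ M := by rw [div_le_iff₀ hn0]; nlinarith
  have hb1 : τ*((M-1)/n) ≤ ν/8 := by
    calc τ*((M-1)/n) ≤ τ*M := mul_le_mul_of_nonneg_left hc1 hτpos.le
    _ = ν/8 := hτM
  have hb2 : τ*(3*(4:ℝ)^i) ≤ 3*(ν/8) := by
    have : (3:ℝ)*(4:ℝ)^i ≤ 3*M := by linarith [h4i.2]
    calc τ*(3*(4:ℝ)^i) ≤ τ*(3*M) := mul_le_mul_of_nonneg_left this hτpos.le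
    _ = 3*(τ*M) := by ring
    _ = 3*(ν/8) := by rw [hτM]
  have hb3 : 0 ≤ τ*(3*(4:ℝ)^i) := by positivity
  have hb4 : 0 ≤ τ*((M-1)/n) := mul_nonneg hτpos.le (div_nonneg (by linarith) hn0.le)
  have e1 : (1:ℝ)/(2*(n:ℝ)) = ν/2 := by rw [hν]; ring
  have e2 : (2:ℝ)/(n:ℝ) = 2*ν := by rw [hν]; ring
  rw [hsp, e1, e2]
  constructor <;> linarith

lemma tt_strictMono : ∀ i j, i < j → j ≤ n → tt n i < tt n j := by
  intro i j hij hjn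
  induction j with
  | zero => omega
  | succ k ih =>
    have hn0 : (0:ℝ) < n := by exact_mod_cast hn
    have hpos : (0:ℝ) < 1/(2*(n:ℝ)) := by positivity
    have hk : tt n k < tt n (k+1) := by
      have := (tt_spacing hn (show k < n by omega)).1
      linarith
    rcases Nat.lt_or_ge i k with h | h
    · exact lt_trans (ih h (by omega)) hk
    · have : i = k := by omega
      rw [this]; exact hk

lemma tt_key {a b c : ℕ} (hab : a < b) (hbc : b < c) (hcn : c ≤ n) :
    4 * dl n < |tt n a + tt n c - 2 * tt n b| := by
  have hn' : (1:ℝ) ≤ n := by exact_mod_cast hn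
  have hn0 : (0:ℝ) < n := by linarith
  have hM1 : (1:ℝ) ≤ 4^n := one_le_pow₀ (by norm_num)
  set M : ℝ := (4:ℝ)^n with hM
  set τ : ℝ := 1/(8*n*M) with hτ
  set ν : ℝ := 1/(n:ℝ) with hν
  have hν0 : 0 < ν := by rw [hν]; positivity
  have hτpos : 0 < τ := by rw [hτ]; positivity
  have hne0 : (n:ℝ) ≠ 0 := ne_of_gt hn0
  have hτM : τ * M = ν/8 := by rw [hτ, hν]; field_simp
  have hdl : dl n = τ/8 := by rw [hτ]; unfold dl; rw [← hM]; field_simp; ring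
  have h4a : (1:ℝ) ≤ 4^a ∧ (4:ℝ)^a ≤ M :=
    ⟨one_le_pow₀ (by norm_num), pow_le_pow_right₀ (by norm_num) (by omega)⟩
  have h4b : (1:ℝ) ≤ 4^b ∧ (4:ℝ)^b ≤ M :=
    ⟨one_le_pow₀ (by norm_num), pow_le_pow_right₀ (by norm_num) (by omega)⟩
  have h4c : (1:ℝ) ≤ 4^c ∧ (4:ℝ)^c ≤ M :=
    ⟨one_le_pow₀ (by norm_num), pow_le_pow_right₀ (by norm_num) (by omega)⟩
  have hτle : τ ≤ ν/8 := by
    calc τ = τ * 1 := by ring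
    _ ≤ τ * M := mul_le_mul_of_nonneg_left hM1 hτpos.le
    _ = ν/8 := hτM
  have hexpand : tt n a + tt n c - 2 * tt n b =
      ((a:ℝ) + c - 2*b) * (ν - τ*((M-1)/n)) + τ * ((4:ℝ)^a + 4^c - 2*4^b) := by
    have h4ne : (4:ℝ)^n ≠ 0 := by positivity
    simp only [tt, ← hM, ← hτ, ← hν]
    rw [hν, hτ, hM]
    push_cast
    field_simp
    ring
  rcases eq_or_ne (a + c) (2*b) with heq | hne
  · -- indices in AP : use strict convexity of 4^x
    have h2b : (2:ℝ)^(2*b) = 2^a * 2^c := by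
      rw [show 2*b = a + c by omega, pow_add]
    have e : ∀ k : ℕ, (4:ℝ)^k = ((2:ℝ)^k)^2 := by
      intro k
      calc (4:ℝ)^k = ((2:ℝ)^2)^k := by norm_num
      _ = ((2:ℝ)^k)^2 := by rw [← pow_mul, mul_comm, pow_mul]
    have hQ : (4:ℝ)^a + 4^c - 2*4^b = ((2:ℝ)^c - 2^a)^2 := by
      have eb : ((2:ℝ)^b)^2 = 2^a * 2^c := by
        rw [← pow_mul, mul_comm b 2, h2b]
      rw [e a, e c, e b, eb]
      ring
    have hca : (2:ℝ)^a + 1 ≤ 2^c := by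
      have h1 : (2:ℝ)^(a+1) ≤ 2^c := pow_le_pow_right₀ (by norm_num) (by omega)
      have h2 : (1:ℝ) ≤ 2^a := one_le_pow₀ (by norm_num)
      rw [pow_succ] at h1
      nlinarith
    have hA0 : ((a:ℝ) + c - 2*b) = 0 := by
      have : ((a:ℝ) + c) = ((2*b : ℕ) : ℝ) := by exact_mod_cast congrArg (Nat.cast (R := ℝ)) heq
      push_cast at this
      linarith
    have hval : tt n a + tt n c - 2 * tt n b = τ * ((2:ℝ)^c - 2^a)^2 := by
      rw [hexpand, hA0, hQ]; ring
    have hsq : 1 ≤ ((2:ℝ)^c - 2^a)^2 := by nlinarith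
    have hge : τ ≤ tt n a + tt n c - 2 * tt n b := by
      rw [hval]
      calc τ = τ * 1 := by ring
      _ ≤ τ * ((2:ℝ)^c - 2^a)^2 := mul_le_mul_of_nonneg_left hsq hτpos.le
    rw [abs_of_pos (by linarith)]
    rw [hdl]; linarith
  · -- index combination nonzero
    set Ar : ℝ := (a:ℝ) + c - 2*b with hAr
    set B : ℝ := ν - τ*((M-1)/n) with hB
    set Q : ℝ := (4:ℝ)^a + 4^c - 2*4^b with hQd
    set E : ℝ := tt n a + tt n c - 2 * tt n b with hE
    have hA1 : (1:ℝ) ≤ |Ar| := by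
      have hz : (a:ℤ) + c - 2*b ≠ 0 := by omega
      have h1 : (1:ℤ) ≤ |(a:ℤ) + c - 2*b| := Int.one_le_abs hz
      have h2 : ((1:ℤ):ℝ) ≤ |(((a:ℤ) + c - 2*b : ℤ) : ℝ)| := by
        rw [← Int.cast_abs]; exact_mod_cast h1
      rw [hAr]
      have h3 : ((a:ℝ) + c - 2*b) = (((a:ℤ) + c - 2*b : ℤ) : ℝ) := by push_cast; ring
      rw [h3, ← Int.cast_abs]
      exact_mod_cast Int.one_le_abs hz
    have hc1 : (M-1)/n ≤ M := by
      rw [div_le_iff₀ hn0]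
      have h := mul_le_mul_of_nonneg_left hn' (show (0:ℝ) ≤ M by linarith)
      linarith
    have hb1 : τ*((M-1)/n) ≤ ν/8 := by
      calc τ*((M-1)/n) ≤ τ*M := mul_le_mul_of_nonneg_left hc1 hτpos.le
      _ = ν/8 := hτM
    have hb4 : 0 ≤ τ*((M-1)/n) := mul_nonneg hτpos.le (div_nonneg (by linarith) hn0.le)
    have hB7 : 7/8*ν ≤ B := by rw [hB]; linarith
    have hBν : B ≤ ν := by rw [hB]; linarith
    have hQb : |Q| ≤ 2*M - 2 := by
      rw [hQd, abs_le]
      constructor <;> linarith [h4a.1, h4a.2, h4b.1, h4b.2, h4c.1, h4c.2]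
    have hτQ : |τ*Q| ≤ τ*(2*M-2) := by
      rw [abs_mul, abs_of_pos hτpos]
      exact mul_le_mul_of_nonneg_left hQb hτpos.le
    have hτ2M : τ*(2*M-2) ≤ ν/4 := by
      have : τ*(2*M-2) ≤ τ*(2*M) := by nlinarith
      have h2 : τ*(2*M) = 2*(τ*M) := by ring
      rw [h2, hτM] at this
      linarith
    have hEeq : Ar * B = E - τ*Q := by rw [hexpand]; ring
    have htri : |Ar * B| ≤ |E| + |τ*Q| := by
      rw [hEeq, sub_eq_add_neg]
      calc |E + -(τ*Q)| ≤ |E| + |-(τ*Q)| := abs_add_le _ _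
      _ = |E| + |τ*Q| := by rw [abs_neg]
    clear_value Ar B Q E τ ν M
    have hmulB : B ≤ |Ar * B| := by
      rw [abs_mul, abs_of_nonneg (by linarith : (0:ℝ) ≤ B)]
      nlinarith
    rw [hdl]
    linarith


include hn in
lemma tt_mono : ∀ i j, i ≤ j → j ≤ n → tt n i ≤ tt n j := by
  intro i j hij hjn
  rcases eq_or_lt_of_le hij with h | h
  · rw [h]
  · exact (tt_strictMono hn i j h hjn).le

include hn in
lemma tt_mem {i : ℕ} (hi : i ≤ n) : 0 ≤ tt n i ∧ tt n i ≤ 1 := by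
  constructor
  · have := tt_mono hn 0 i (Nat.zero_le i) hi
    rw [tt_zero] at this; exact this
  · have := tt_mono hn i n hi le_rfl
    rw [tt_n hn] at this; exact this

include hn in
lemma gap_choice (C : Set ℝ) (hnd : IsNowhereDense C) (φ : ℝ → ℝ) (hφc : Continuous φ)
    (hφ0 : φ 0 = 0) (hφ1 : φ 1 = 1) {i : ℕ} (hi : i < n) :
    ∃ u v : ℝ, u < v ∧ ∀ x, u ≤ x → x ≤ v →
      0 < x ∧ x < 1 ∧ x ∉ closure C ∧ tt n i < φ x ∧ φ x < tt n (i+1) := by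
  have hsp := tt_spacing hn hi
  have hn0 : (0:ℝ) < n := by exact_mod_cast hn
  have hpos : (0:ℝ) < 1/(2*(n:ℝ)) := by positivity
  have hti0 : 0 ≤ tt n i := (tt_mem hn (by omega)).1
  have hti1 : tt n (i+1) ≤ 1 := (tt_mem hn (by omega)).2
  set mid : ℝ := (tt n i + tt n (i+1))/2 with hmid
  have hmid1 : tt n i < mid := by rw [hmid]; linarith
  have hmid2 : mid < tt n (i+1) := by rw [hmid]; linarith
  have hmem : mid ∈ Icc (φ 0) (φ 1) := by
    rw [hφ0, hφ1]; exact ⟨by linarith, by linarith⟩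
  obtain ⟨x0, hx0I, hx0⟩ := intermediate_value_Icc (by norm_num : (0:ℝ) ≤ 1)
    hφc.continuousOn hmem
  have hx0pos : 0 < x0 := by
    rcases eq_or_lt_of_le hx0I.1 with h | h
    · exfalso; rw [← h, hφ0] at hx0; linarith
    · exact h
  have hx0lt : x0 < 1 := by
    rcases eq_or_lt_of_le hx0I.2 with h | h
    · exfalso; rw [h, hφ1] at hx0; linarith
    · exact h
  set U : Set ℝ := Ioo 0 1 ∩ φ ⁻¹' (Ioo (tt n i) (tt n (i+1))) with hU
  have hUopen : IsOpen U := (isOpen_Ioo).inter ((isOpen_Ioo).preimage hφc)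
  have hx0U : x0 ∈ U := ⟨⟨hx0pos, hx0lt⟩, by rw [Set.mem_preimage, hx0]; exact ⟨hmid1, hmid2⟩⟩
  have hWopen : IsOpen (U \ closure C) := hUopen.sdiff isClosed_closure
  have hWne : (U \ closure C).Nonempty := by
    by_contra hne
    rw [Set.not_nonempty_iff_eq_empty, diff_eq_empty] at hne
    have : U ⊆ interior (closure C) := interior_maximal hne hUopen
    rw [hnd] at this
    exact this hx0U
  obtain ⟨q, hq⟩ := hWne
  obtain ⟨r, hr, hball⟩ := Metric.isOpen_iff.mp hWopen q hq
  rw [Real.ball_eq_Ioo] at hball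
  refine ⟨q - r/2, q + r/2, by linarith, ?_⟩
  intro x hxu hxv
  have hx : x ∈ U \ closure C := hball ⟨by linarith, by linarith⟩
  obtain ⟨⟨⟨h1, h2⟩, h3⟩, h4⟩ := hx
  exact ⟨h1, h2, h4, h3.1, h3.2⟩


section MoreTT
include hn

lemma dl_le_nu : dl n ≤ (1/(n:ℝ))/64 := by
  have hn' : (1:ℝ) ≤ n := by exact_mod_cast hn
  have hn0 : (0:ℝ) < n := by linarith
  have hM1 : (1:ℝ) ≤ 4^n := one_le_pow₀ (by norm_num)
  have e : (1/(n:ℝ))/64 = 1/(64*n) := by ring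
  rw [e]
  unfold dl
  rw [div_le_div_iff₀ (by positivity) (by positivity)]
  nlinarith

lemma two_dl_lt_spacing {i : ℕ} (hi : i < n) : 2 * dl n < tt n (i+1) - tt n i := by
  have h1 := (tt_spacing hn hi).1
  have h2 := dl_le_nu hn
  have hn0 : (0:ℝ) < n := by exact_mod_cast hn
  have hν0 : (0:ℝ) < 1/(n:ℝ) := by positivity
  have e : (1:ℝ)/(2*(n:ℝ)) = (1/(n:ℝ))/2 := by ring
  rw [e] at h1
  linarith

lemma tt_window {l r : ℕ} (hlr : l ≤ r) (hr2 : r ≤ l + 2) (hrn : r ≤ n) :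
    tt n r - tt n l ≤ 4/n := by
  have hn0 : (0:ℝ) < n := by exact_mod_cast hn
  have h4 : (0:ℝ) < 2/(n:ℝ) := by positivity
  have e : (4:ℝ)/(n:ℝ) = 2*(2/(n:ℝ)) := by ring
  rcases show r = l ∨ r = l + 1 ∨ r = l + 2 by omega with h | h | h
  · rw [h]; simp; positivity
  · subst h
    have := (tt_spacing hn (show l < n by omega)).2
    rw [e]; linarith
  · subst h
    have h1 := (tt_spacing hn (show l < n by omega)).2
    have h2 := (tt_spacing hn (show l+1 < n by omega)).2
    rw [show l+1+1 = l+2 by omega] at h2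
    rw [e]; linarith

end MoreTT

/-- the domain breakpoints -/
noncomputable def bp (n : ℕ) (u v : ℕ → ℝ) : ℕ → ℝ := fun j =>
  if j = 0 then 0 else if 2*n+1 ≤ j then 1 else if j % 2 = 1 then u (j/2) else v (j/2 - 1)

/-- the target breakpoint values -/
noncomputable def bs (n : ℕ) : ℕ → ℝ := fun j =>
  if j = 0 then 0 else if 2*n+1 ≤ j then 1 else if j % 2 = 1 then tt n (j/2) + dl n
    else tt n (j/2) - dl n

section BP
omit hn
variable {u v : ℕ → ℝ}

lemma bp_zero : bp n u v 0 = 0 := by simp [bp]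

lemma bp_last : bp n u v (2*n+1) = 1 := by
  unfold bp; rw [if_neg (by omega), if_pos (by omega)]

lemma bp_odd {i : ℕ} (hi : i < n) : bp n u v (2*i+1) = u i := by
  unfold bp
  rw [if_neg (by omega), if_neg (by omega), if_pos (by omega),
    show (2*i+1)/2 = i by omega]

lemma bp_even {i : ℕ} (hi : i < n) : bp n u v (2*i+2) = v i := by
  unfold bp
  rw [if_neg (by omega), if_neg (by omega), if_neg (by omega),
    show (2*i+2)/2 - 1 = i by omega]

lemma bs_zero : bs n 0 = 0 := by simp [bs]

lemma bs_last : bs n (2*n+1) = 1 := by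
  unfold bs; rw [if_neg (by omega), if_pos (by omega)]

lemma bs_odd {i : ℕ} (hi : i < n) : bs n (2*i+1) = tt n i + dl n := by
  unfold bs
  rw [if_neg (by omega), if_neg (by omega), if_pos (by omega),
    show (2*i+1)/2 = i by omega]

lemma bs_even {i : ℕ} (hi : i < n) : bs n (2*i+2) = tt n (i+1) - dl n := by
  unfold bs
  rw [if_neg (by omega), if_neg (by omega), if_neg (by omega),
    show (2*i+2)/2 = i+1 by omega]

lemma bp_incr (hn : 1 ≤ n) (huv : ∀ i, i < n → u i < v i) (hu0 : ∀ i, i < n → 0 < u i)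
    (hv1 : ∀ i, i < n → v i < 1) (hcross : ∀ i, i + 1 < n → v i < u (i+1)) :
    ∀ j < 2*n+1, bp n u v j < bp n u v (j+1) := by
  intro j hj
  rcases Nat.even_or_odd j with ⟨i, hji⟩ | ⟨i, hji⟩
  · rcases Nat.eq_zero_or_pos i with h0 | h0
    · have : j = 0 := by omega
      subst this
      rw [bp_zero, show (0:ℕ)+1 = 2*0+1 by ring, bp_odd (show 0 < n by omega)]
      exact hu0 0 (by omega)
    · have hin : i ≤ n := by omega
      rw [show j = 2*(i-1)+2 by omega, bp_even (show i-1 < n by omega)]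
      rcases Nat.lt_or_ge i n with h | h
      · rw [show 2*(i-1)+2+1 = 2*i+1 by omega, bp_odd h]
        have := hcross (i-1) (by omega)
        rwa [show i-1+1 = i by omega] at this
      · have hieq : i = n := by omega
        rw [show 2*(i-1)+2+1 = 2*n+1 by omega, bp_last]
        exact hv1 (i-1) (by omega)
  · have hi : i < n := by omega
    rw [hji, bp_odd hi, show 2*i+1+1 = 2*i+2 by ring, bp_even hi]
    exact huv i hi

lemma bs_incr (hn : 1 ≤ n) : ∀ j < 2*n+1, bs n j < bs n (j+1) := by
  intro j hj
  have hdl := dl_pos hn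
  rcases Nat.even_or_odd j with ⟨i, hji⟩ | ⟨i, hji⟩
  · rcases Nat.eq_zero_or_pos i with h0 | h0
    · have : j = 0 := by omega
      subst this
      rw [bs_zero, show (0:ℕ)+1 = 2*0+1 by ring, bs_odd (show 0 < n by omega), tt_zero]
      linarith
    · rw [show j = 2*(i-1)+2 by omega, bs_even (show i-1 < n by omega),
        show i-1+1 = i by omega]
      rcases Nat.lt_or_ge i n with h | h
      · rw [show 2*(i-1)+2+1 = 2*i+1 by omega, bs_odd h]
        linarith
      · have hieq : i = n := by omega
        rw [show 2*(i-1)+2+1 = 2*n+1 by omega, bs_last, hieq, tt_n hn]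
        linarith
  · have hi : i < n := by omega
    rw [hji, bs_odd hi, show 2*i+1+1 = 2*i+2 by ring, bs_even hi]
    have := two_dl_lt_spacing hn hi
    linarith

end BP

end APaux

open APaux in
/-- For nowhere dense `C ⊆ [0,1]`, `f ∈ H⁺` and `ε > 0`, there is `g ∈ H⁺` with
`‖g - f‖ < ε` such that `g(C)` has no 3-term AP of step `d ≥ ε`. -/
theorem exists_close_map_no_large_step_AP (C : Set ℝ) (hC : C ⊆ Set.Icc 0 1)
    (hnd : IsNowhereDense C) (f : C(Set.Icc (0:ℝ) 1, ℝ)) (hf : f ∈ Hplus)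
    (ε : ℝ) (hε : 0 < ε) :
    ∃ g ∈ Hplus, ‖g - f‖ < ε ∧
      ¬ ∃ x d : ℝ, ε ≤ d ∧ x ∈ imgC g C ∧ x + d ∈ imgC g C ∧ x + 2 * d ∈ imgC g C := by
  classical
  obtain ⟨hfm, hf0, hf1⟩ := hf
  set n : ℕ := max 1 ⌈8/ε⌉₊ with hndef
  have hn : 1 ≤ n := le_max_left _ _
  have hn0 : (0:ℝ) < n := by exact_mod_cast hn
  have hνε : 1/(n:ℝ) ≤ ε/8 := by
    have h1 : (8/ε : ℝ) ≤ ⌈8/ε⌉₊ := Nat.le_ceil _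
    have h2 : ((⌈8/ε⌉₊ : ℕ):ℝ) ≤ (n:ℝ) := by exact_mod_cast le_max_right 1 ⌈8/ε⌉₊
    have h3 : 8/ε ≤ (n:ℝ) := le_trans h1 h2
    have h4 : (8:ℝ) ≤ (n:ℝ) * ε := (div_le_iff₀ hε).mp h3
    rw [div_le_div_iff₀ hn0 (by norm_num)]
    linarith
  set Φ : ℝ → ℝ := fun x => f (projIcc 0 1 (by norm_num) x) with hΦdef
  have hΦc : Continuous Φ := f.continuous.comp continuous_projIcc
  have hΦm : Monotone Φ := hfm.monotone.comp (monotone_projIcc _)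
  have hΦval : ∀ x : Icc (0:ℝ) 1, Φ x.val = f x := by
    intro x
    rw [hΦdef]
    simp only [projIcc_val]
  have hΦ0 : Φ 0 = 0 := by rw [hΦdef]; simp only [projIcc_left]; exact hf0
  have hΦ1 : Φ 1 = 1 := by rw [hΦdef]; simp only [projIcc_right]; exact hf1
  have hsel := fun (i : ℕ) (hi : i < n) =>
    gap_choice hn C hnd Φ hΦc hΦ0 hΦ1 hi
  choose! u v huv hall using hsel
  have hu0 : ∀ i, i < n → 0 < u i := fun i hi => (hall i hi (u i) le_rfl (huv i hi).le).1
  have hv1 : ∀ i, i < n → v i < 1 := fun i hi => (hall i hi (v i) (huv i hi).le le_rfl).2.1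
  have hCdis : ∀ i, i < n → ∀ x, u i ≤ x → x ≤ v i → x ∉ closure C :=
    fun i hi x h1 h2 => (hall i hi x h1 h2).2.2.1
  have hΦu : ∀ i, i < n → tt n i < Φ (u i) ∧ Φ (u i) < tt n (i+1) :=
    fun i hi => (hall i hi (u i) le_rfl (huv i hi).le).2.2.2
  have hΦv : ∀ i, i < n → tt n i < Φ (v i) ∧ Φ (v i) < tt n (i+1) :=
    fun i hi => (hall i hi (v i) (huv i hi).le le_rfl).2.2.2
  have hcross : ∀ i, i + 1 < n → v i < u (i+1) := by
    intro i hi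
    by_contra hcon
    push_neg at hcon
    have h1 : Φ (u (i+1)) ≤ Φ (v i) := hΦm hcon
    have h2 := (hΦv i (by omega)).2
    have h3 := (hΦu (i+1) hi).1
    linarith
  have hp := bp_incr hn huv hu0 hv1 hcross
  have hs := bs_incr hn
  set G : ℝ → ℝ := PL (2*n+1) (bp n u v) (bs n) with hGdef
  have hGc : Continuous G := PL_continuous _ _ _
  have hGm : Monotone G := PL_mono hp hs
  have hGat : ∀ k, k ≤ 2*n+1 → G (bp n u v k) = bs n k := by
    intro k hk
    rw [hGdef, PL_at hp hk, bs_zero, sub_zero]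
  have hmemIcc : ∀ z : Icc (0:ℝ) 1, (z:ℝ) ∈ Icc (bp n u v 0) (bp n u v (2*n+1)) := by
    intro z
    rw [bp_zero, bp_last]
    exact z.2
  set g : C(Icc (0:ℝ) 1, ℝ) := ⟨fun x => G x.val, hGc.comp continuous_subtype_val⟩ with hgdef
  have hgapp : ∀ x : Icc (0:ℝ) 1, g x = G x.val := fun x => rfl
  have hgH : g ∈ Hplus := by
    refine ⟨?_, ?_, ?_⟩
    · intro a b hab
      exact PL_strictMonoOn hp hs (by omega) (hmemIcc a) (hmemIcc b)
        (Subtype.coe_lt_coe.mpr hab)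
    · show G 0 = 0
      have h := hGat 0 (by omega)
      rw [bp_zero, bs_zero] at h
      exact h
    · show G 1 = 1
      have h := hGat (2*n+1) le_rfl
      rw [bp_last, bs_last] at h
      exact h
  have hdl := dl_pos hn
  have Hseg : ∀ k, k < 2*n+1 → ∃ l r : ℕ, l ≤ r ∧ r ≤ l + 2 ∧ r ≤ n ∧
      tt n l ≤ bs n k ∧ bs n (k+1) ≤ tt n r ∧
      tt n l ≤ Φ (bp n u v k) ∧ Φ (bp n u v (k+1)) ≤ tt n r := by
    intro k hk
    rcases Nat.even_or_odd k with ⟨i, hki⟩ | ⟨i, hki⟩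
    · rcases Nat.eq_zero_or_pos i with h0 | h0
      · have hk0 : k = 0 := by omega
        subst hk0
        refine ⟨0, 1, by omega, by omega, by omega, ?_, ?_, ?_, ?_⟩
        · rw [bs_zero, tt_zero]
        · rw [show (0:ℕ)+1 = 2*0+1 by ring, bs_odd (show 0 < n by omega)]
          have := two_dl_lt_spacing hn (show 0 < n by omega)
          linarith
        · rw [bp_zero, hΦ0, tt_zero]
        · rw [show (0:ℕ)+1 = 2*0+1 by ring, bp_odd (show 0 < n by omega)]
          exact (hΦu 0 (by omega)).2.le
      · have hin : i ≤ n := by omega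
        rw [show k = 2*(i-1)+2 by omega]
        rcases Nat.lt_or_ge i n with h | h
        · refine ⟨i-1, i+1, by omega, by omega, by omega, ?_, ?_, ?_, ?_⟩
          · rw [bs_even (show i-1 < n by omega)]
            have := two_dl_lt_spacing hn (show i-1 < n by omega)
            linarith
          · rw [show 2*(i-1)+2+1 = 2*i+1 by omega, bs_odd h]
            have := two_dl_lt_spacing hn h
            linarith
          · rw [bp_even (show i-1 < n by omega)]
            exact (hΦv (i-1) (by omega)).1.le
          · rw [show 2*(i-1)+2+1 = 2*i+1 by omega, bp_odd h]
            have h2 := (hΦu i h).2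
            have e : i + 1 ≤ i - 1 + 2 := by omega
            have := tt_mono hn (i+1) (i-1+2) e (by omega)
            linarith
        · have hieq : i = n := by omega
          refine ⟨n-1, n, by omega, by omega, le_rfl, ?_, ?_, ?_, ?_⟩
          · rw [show i-1 = n-1 by omega, bs_even (show n-1 < n by omega)]
            have := two_dl_lt_spacing hn (show n-1 < n by omega)
            linarith
          · rw [show 2*(i-1)+2+1 = 2*n+1 by omega, bs_last]
            rw [show n = n-1+1 by omega] at hn ⊢
            rw [tt_n hn]
          · rw [show i-1 = n-1 by omega, bp_even (show n-1 < n by omega)]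
            exact (hΦv (n-1) (by omega)).1.le
          · rw [show 2*(i-1)+2+1 = 2*n+1 by omega, bp_last, hΦ1]
            rw [show n = n-1+1 by omega] at hn ⊢
            rw [tt_n hn]
    · have hi : i < n := by omega
      rw [hki]
      refine ⟨i, i+1, by omega, by omega, by omega, ?_, ?_, ?_, ?_⟩
      · rw [bs_odd hi]; linarith
      · rw [show 2*i+1+1 = 2*i+2 by ring, bs_even hi]; linarith
      · rw [bp_odd hi]; exact (hΦu i hi).1.le
      · rw [show 2*i+1+1 = 2*i+2 by ring, bp_even hi]; exact (hΦv i hi).2.le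
  have hnorm1 : ∀ x : Icc (0:ℝ) 1, |g x - f x| ≤ ε/2 := by
    intro x
    obtain ⟨k, hk, hk1, hk2⟩ := exists_segment (x := (x:ℝ)) hp (by omega)
      (by rw [bp_zero]; exact x.2.1) (by rw [bp_last]; exact x.2.2)
    obtain ⟨l, r, hlr, hr2, hrn, hbs1, hbs2, hΦl, hΦr⟩ := Hseg k hk
    have hG1 : bs n k ≤ G x.val := by
      have h := hGm hk1
      rwa [hGat k (by omega)] at h
    have hG2 : G x.val ≤ bs n (k+1) := by
      have h := hGm hk2
      rwa [hGat (k+1) (by omega)] at h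
    have hf1' : Φ (bp n u v k) ≤ Φ x.val := hΦm hk1
    have hf2' : Φ x.val ≤ Φ (bp n u v (k+1)) := hΦm hk2
    have hwin := tt_window hn hlr hr2 hrn
    have h4ν : (4:ℝ)/(n:ℝ) = 4*(1/(n:ℝ)) := by ring
    rw [hgapp, ← hΦval x]
    rw [abs_le]
    constructor <;> [skip; skip] <;> linarith
  have hnorm : ‖g - f‖ < ε := by
    have hle : ‖g - f‖ ≤ ε/2 := by
      refine (ContinuousMap.norm_le _ (by linarith)).mpr (fun x => ?_)
      rw [ContinuousMap.sub_apply, Real.norm_eq_abs]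
      exact hnorm1 x
    linarith
  have hCmap : ∀ ξ : Icc (0:ℝ) 1, (ξ:ℝ) ∈ C → ∃ i, i ≤ n ∧ |G ξ.val - tt n i| ≤ dl n := by
    intro ξ hξC
    obtain ⟨k, hk, hk1, hk2⟩ := exists_segment (x := (ξ:ℝ)) hp (by omega)
      (by rw [bp_zero]; exact ξ.2.1) (by rw [bp_last]; exact ξ.2.2)
    have hG1 : bs n k ≤ G ξ.val := by
      have h := hGm hk1
      rwa [hGat k (by omega)] at h
    have hG2 : G ξ.val ≤ bs n (k+1) := by
      have h := hGm hk2
      rwa [hGat (k+1) (by omega)] at h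
    rcases Nat.even_or_odd k with ⟨i, hki⟩ | ⟨i, hki⟩
    · rcases Nat.eq_zero_or_pos i with h0 | h0
      · have hk0 : k = 0 := by omega
        subst hk0
        rw [bs_zero] at hG1
        rw [show (0:ℕ)+1 = 2*0+1 by ring, bs_odd (show 0 < n by omega), tt_zero] at hG2
        refine ⟨0, by omega, ?_⟩
        rw [tt_zero, abs_le]
        constructor <;> linarith
      · rcases Nat.lt_or_ge i n with h | h
        · rw [show k = 2*(i-1)+2 by omega] at hG1 hG2
          rw [bs_even (show i-1 < n by omega), show i-1+1 = i by omega] at hG1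
          rw [show 2*(i-1)+2+1 = 2*i+1 by omega, bs_odd h] at hG2
          refine ⟨i, by omega, ?_⟩
          rw [abs_le]
          constructor <;> linarith
        · have hieq : i = n := by omega
          rw [show k = 2*(i-1)+2 by omega] at hG1 hG2
          rw [bs_even (show i-1 < n by omega), show i-1+1 = i by omega, hieq] at hG1
          rw [show 2*(i-1)+2+1 = 2*n+1 by omega, bs_last] at hG2
          have htn : tt n n = 1 := tt_n hn
          refine ⟨n, le_rfl, ?_⟩
          rw [abs_le]
          constructor <;> linarith
    · exfalso
      have hi : i < n := by omega
      rw [hki] at hk1 hk2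
      rw [bp_odd hi] at hk1
      rw [show 2*i+1+1 = 2*i+2 by ring, bp_even hi] at hk2
      exact hCdis i hi ξ.val hk1 hk2 (subset_closure hξC)
  refine ⟨g, hgH, hnorm, ?_⟩
  rintro ⟨x, d, hd, h1, h2, h3⟩
  obtain ⟨ξ1, hξ1C, hξ1⟩ := h1
  obtain ⟨ξ2, hξ2C, hξ2⟩ := h2
  obtain ⟨ξ3, hξ3C, hξ3⟩ := h3
  obtain ⟨a, han, ha⟩ := hCmap ξ1 hξ1C
  obtain ⟨b, hbn, hb⟩ := hCmap ξ2 hξ2C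
  obtain ⟨c, hcn, hc⟩ := hCmap ξ3 hξ3C
  rw [← hgapp ξ1, hξ1] at ha
  rw [← hgapp ξ2, hξ2] at hb
  rw [← hgapp ξ3, hξ3] at hc
  have hdlν := dl_le_nu hn
  have h2dl : 2 * dl n < ε := by linarith
  have h1a := abs_le.mp ha
  have h2b := abs_le.mp hb
  have h3c := abs_le.mp hc
  have hab : a < b := by
    by_contra hcon
    push_neg at hcon
    have := tt_mono hn b a hcon han
    linarith
  have hbc : b < c := by
    by_contra hcon
    push_neg at hcon
    have := tt_mono hn c b hcon hbn
    linarith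
  have hkey := tt_key hn hab hbc hcn
  have habs : |tt n a + tt n c - 2 * tt n b| ≤ 4 * dl n := by
    rw [abs_le]
    constructor <;> linarith
  linarith
end
end

section
/- Let C ⊆ [0,1] be a nowhere dense set. Then for every ε > 0, the set H_ε(C) = {φ ∈ H⁺ : there are no x ∈ ℝ and d ≥ ε with x, x+d, x+2d ∈ φ(C)} is dense in H⁺ (with the topology of the supremum norm). -/
open Set

open Finset

/-- monotone along partial steps -/
lemma step_mono {M : ℕ} {x : ℕ → ℝ} (hx : ∀ j < M, x j < x (j+1)) :
    ∀ i j, i ≤ j → j ≤ M → x i ≤ x j := by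
  intro i j hij hjM
  induction j with
  | zero => simp_all
  | succ n ih =>
    rcases Nat.eq_or_lt_of_le hij with rfl | h
    · exact le_rfl
    · exact le_trans (ih (Nat.lt_succ_iff.mp h) (le_trans (Nat.le_succ n) hjM))
        (le_of_lt (hx n (Nat.lt_of_succ_le hjM)))

lemma exists_piece {M : ℕ} {x : ℕ → ℝ} (hx : ∀ j < M, x j < x (j+1)) {u : ℝ}
    (h0 : x 0 ≤ u) (hM : u < x M) : ∃ j < M, x j ≤ u ∧ u < x (j+1) := by
  classical
  set j := Nat.findGreatest (fun j => x j ≤ u) M with hj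
  have hspec : x j ≤ u := Nat.findGreatest_spec (P := fun j => x j ≤ u) (Nat.zero_le M) h0
  have hjM : j ≤ M := Nat.findGreatest_le M
  have hjlt : j < M := by
    rcases Nat.lt_or_ge j M with h | h
    · exact h
    · have : j = M := le_antisymm hjM h
      rw [this] at hspec; exact absurd hspec (not_le.mpr hM)
  refine ⟨j, hjlt, hspec, ?_⟩
  by_contra hc
  push_neg at hc
  exact Nat.findGreatest_is_greatest (Nat.lt_succ_self j) (Nat.succ_le_of_lt hjlt) hc

/-- Piecewise linear interpolation existence. -/
lemma pl_exists (M : ℕ) (x y : ℕ → ℝ)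
    (hx : ∀ j < M, x j < x (j+1)) (hy : ∀ j < M, y j < y (j+1)) :
    ∃ g : ℝ → ℝ, Continuous g ∧ Monotone g ∧
      StrictMonoOn g (Set.Icc (x 0) (x M)) ∧ (∀ k ≤ M, g (x k) = y k) := by
  classical
  set s : ℕ → ℝ := fun j => (y (j+1) - y j) / (x (j+1) - x j) with hs
  have hspos : ∀ j < M, 0 < s j := fun j hj =>
    div_pos (sub_pos.mpr (hy j hj)) (sub_pos.mpr (hx j hj))
  set c : ℕ → ℝ → ℝ := fun j t => min (max t (x j)) (x (j+1)) with hc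
  have hcmono : ∀ j, Monotone (c j) := fun j =>
    (monotone_id.max monotone_const).min monotone_const
  set g : ℝ → ℝ := fun t => y 0 + ∑ j ∈ Finset.range M, s j * (c j t - x j) with hg
  have hgmono : Monotone g := by
    intro u v huv
    apply add_le_add le_rfl
    apply Finset.sum_le_sum
    intro j hj
    have := hspos j (Finset.mem_range.mp hj)
    nlinarith [hcmono j huv]
  have hcont : Continuous g := by
    apply continuous_const.add
    apply continuous_finset_sum
    intro j _
    exact continuous_const.mul (((continuous_id.max continuous_const).min continuous_const).sub continuous_const)
  have hval : ∀ k ≤ M, g (x k) = y k := by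
    intro k hk
    have hterm : ∀ j ∈ Finset.range M, s j * (c j (x k) - x j)
        = if j < k then y (j+1) - y j else 0 := by
      intro j hj
      have hjM := Finset.mem_range.mp hj
      by_cases hjk : j < k
      · have h1 : x (j+1) ≤ x k := step_mono hx (j+1) k hjk hk
        have h2 : x j ≤ x k := step_mono hx j k (le_of_lt hjk) hk
        have : c j (x k) = x (j+1) := by
          rw [hc]; simp only []
          rw [max_eq_left h2, min_eq_right h1]
        rw [this, if_pos hjk, hs]
        have hne : x (j+1) - x j ≠ 0 := ne_of_gt (sub_pos.mpr (hx j hjM))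
        field_simp
      · push_neg at hjk
        have h2 : x k ≤ x j := step_mono hx k j hjk (le_of_lt hjM)
        have : c j (x k) = x j := by
          rw [hc]; simp only []
          rw [max_eq_right h2, min_eq_left (le_of_lt (hx j hjM))]
        rw [this, if_neg (not_lt.mpr hjk)]; ring
    rw [hg]
    simp only []
    rw [Finset.sum_congr rfl hterm]
    have hsub : Finset.range k ⊆ Finset.range M := Finset.range_subset_range.mpr hk
    rw [← Finset.sum_subset hsub (by intro j _ hj; rw [if_neg]; simpa using hj)]
    have : ∀ j ∈ Finset.range k, (if j < k then y (j+1) - y j else 0) = y (j+1) - y j := by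
      intro j hj; rw [if_pos (Finset.mem_range.mp hj)]
    rw [Finset.sum_congr rfl this, Finset.sum_range_sub (fun j => y j) k]
    ring
  refine ⟨g, hcont, hgmono, ?_, hval⟩
  · intro u hu v hv huv
    obtain ⟨j, hjM, hju, huj⟩ := exists_piece hx hu.1 (lt_of_lt_of_le huv hv.2)
    have hkey : c j u < c j v := by
      have h1 : c j u = u := by
        rw [hc]; simp only []
        rw [max_eq_left hju, min_eq_left (le_of_lt huj)]
      have h2 : u < c j v := by
        rw [hc]; simp only []
        rw [max_eq_left (le_trans hju (le_of_lt huv))]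
        exact lt_min huv huj
      linarith
    rw [hg]
    apply add_lt_add_of_le_of_lt le_rfl
    apply Finset.sum_lt_sum
    · intro i hi
      have := hspos i (Finset.mem_range.mp hi)
      nlinarith [hcmono i (le_of_lt huv)]
    · refine ⟨j, Finset.mem_range.mpr hjM, ?_⟩
      have := hspos j hjM
      nlinarith

lemma pow3_ne (A B Cc : ℕ) (hA : A ≠ Cc) (hB : B ≠ Cc) : (3:ℝ)^A + 3^B ≠ 2 * 3^Cc := by
  have h3 : (1:ℝ) ≤ 3 := by norm_num
  rcases Nat.lt_or_ge Cc A with h | h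
  · have : (3:ℝ)^(Cc+1) ≤ 3^A := pow_le_pow_right₀ h3 h
    have hpB : (0:ℝ) < 3^B := by positivity
    rw [pow_succ] at this
    nlinarith [pow_pos (by norm_num : (0:ℝ) < 3) Cc]
  · have hA' : A < Cc := lt_of_le_of_ne h hA
    rcases Nat.lt_or_ge Cc B with h2 | h2
    · have : (3:ℝ)^(Cc+1) ≤ 3^B := pow_le_pow_right₀ h3 h2
      have hpA : (0:ℝ) < 3^A := by positivity
      rw [pow_succ] at this
      nlinarith [pow_pos (by norm_num : (0:ℝ) < 3) Cc]
    · have hB' : B < Cc := lt_of_le_of_ne h2 hB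
      have e1 : (3:ℝ)^(A+1) ≤ 3^Cc := pow_le_pow_right₀ h3 hA'
      have e2 : (3:ℝ)^(B+1) ≤ 3^Cc := pow_le_pow_right₀ h3 hB'
      rw [pow_succ] at e1 e2
      have : (0:ℝ) < 3^Cc := by positivity
      nlinarith

lemma inv3_ne (j k l : ℕ) (hjk : j ≠ k) (hlk : l ≠ k) :
    (3:ℝ)⁻¹^j + 3⁻¹^l ≠ 2 * 3⁻¹^k := by
  intro h
  apply pow3_ne (l+k) (j+k) (j+l) (by omega) (by omega)
  simp only [inv_pow] at h
  field_simp at h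
  rw [pow_add, pow_add, pow_add]
  linarith

lemma nd_homeo {X Y : Type*} [TopologicalSpace X] [TopologicalSpace Y] (h : X ≃ₜ Y)
    {s : Set X} (hs : IsNowhereDense s) : IsNowhereDense (⇑h '' s) := by
  unfold IsNowhereDense at *
  rw [← h.image_closure, ← h.image_interior, hs, Set.image_empty]

lemma nd_pre {C : Set ℝ} (hC : IsNowhereDense C) :
    IsNowhereDense ((Subtype.val : Set.Icc (0:ℝ) 1 → ℝ) ⁻¹' C) := by
  unfold IsNowhereDense at *
  have h1 : closure ((Subtype.val : Set.Icc (0:ℝ) 1 → ℝ) ⁻¹' C) ⊆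
      Subtype.val ⁻¹' (closure C) := Continuous.closure_preimage_subset continuous_subtype_val C
  refine Set.eq_empty_iff_forall_notMem.mpr fun p hp => ?_
  have hp' : Subtype.val ⁻¹' (closure C) ∈ nhds p :=
    mem_interior_iff_mem_nhds.mp (interior_mono h1 hp)
  rw [nhds_subtype_eq_comap, Filter.mem_comap] at hp'
  obtain ⟨V, hV, hVsub⟩ := hp'
  obtain ⟨σ, hσ, hball⟩ := Metric.mem_nhds_iff.mp hV
  have hsub : Metric.ball (p.val) σ ∩ Set.Icc 0 1 ⊆ closure C := by
    intro z hz
    have hm : (⟨z, hz.2⟩ : Set.Icc (0:ℝ) 1) ∈ Subtype.val ⁻¹' V := hball hz.1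
    exact hVsub hm
  have hmem := p.2
  have key : ∃ W : Set ℝ, W.Nonempty ∧ IsOpen W ∧ W ⊆ closure C := by
    rcases lt_or_eq_of_le hmem.2 with h1lt | h1eq
    · refine ⟨Set.Ioo (p.val) (min (p.val + σ) 1), Set.nonempty_Ioo.mpr ?_, isOpen_Ioo, ?_⟩
      · exact lt_min_iff.mpr ⟨by linarith, h1lt⟩
      · intro z hz
        have hz2 := lt_min_iff.mp hz.2
        refine hsub ⟨?_, by linarith [hz.1, hmem.1], le_of_lt hz2.2⟩
        rw [Real.ball_eq_Ioo]
        exact ⟨by linarith [hz.1, hmem.1], hz2.1⟩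
    · refine ⟨Set.Ioo (max (1 - σ) 0) 1, Set.nonempty_Ioo.mpr ?_, isOpen_Ioo, ?_⟩
      · exact max_lt_iff.mpr ⟨by linarith, by norm_num⟩
      · intro z hz
        have hz1 := max_lt_iff.mp hz.1
        refine hsub ⟨?_, le_of_lt hz1.2, le_of_lt hz.2⟩
        rw [Real.ball_eq_Ioo, h1eq]
        exact ⟨hz1.1, by linarith [hz.2, hz1.1, hσ]⟩
  obtain ⟨W, ⟨w, hw⟩, hWo, hWsub⟩ := key
  have : w ∈ interior (closure C) := mem_interior.mpr ⟨W, hWsub, hWo, hw⟩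
  rw [hC] at this; exact this

lemma nd_img {B : Set (Set.Icc (0:ℝ) 1)} (hB : IsNowhereDense B) :
    IsNowhereDense ((Subtype.val : Set.Icc (0:ℝ) 1 → ℝ) '' B) := by
  unfold IsNowhereDense at *
  set K := closure B with hK
  have hKcpt : IsCompact (Subtype.val '' K) :=
    (isClosed_closure.isCompact).image continuous_subtype_val
  have hcl : closure (Subtype.val '' B) ⊆ Subtype.val '' K :=
    closure_minimal (Set.image_mono subset_closure) hKcpt.isClosed
  refine Set.eq_empty_iff_forall_notMem.mpr fun z hz => ?_
  have hzK : z ∈ interior (Subtype.val '' K) := interior_mono hcl hz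
  set U := interior (Subtype.val '' K) with hU
  have hUIcc : U ⊆ Set.Icc 0 1 := by
    refine subset_trans interior_subset ?_
    rintro _ ⟨p, _, rfl⟩; exact p.2
  have hUIoo : U ⊆ Set.Ioo (0:ℝ) 1 := by
    rw [← interior_Icc]
    exact interior_maximal hUIcc isOpen_interior
  have hpre : (Subtype.val : Set.Icc (0:ℝ) 1 → ℝ) ⁻¹' U ⊆ K := by
    refine subset_trans (Set.preimage_mono interior_subset) ?_
    rw [Set.preimage_image_eq K Subtype.val_injective]
  have hzmem : (⟨z, hUIcc hzK⟩ : Set.Icc (0:ℝ) 1) ∈ interior (closure B) :=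
    mem_interior.mpr ⟨Subtype.val ⁻¹' U, hpre, isOpen_interior.preimage continuous_subtype_val,
      by exact hzK⟩
  rw [hB] at hzmem; exact hzmem

lemma inv3_ne2 (p q : ℕ) (h : p ≠ q) : (3:ℝ)⁻¹^p ≠ 2 * 3⁻¹^q := by
  intro hc
  simp only [inv_pow] at hc
  field_simp at hc
  rcases Nat.lt_or_ge p q with hl | hl
  · have : (3:ℝ)^(p+1) ≤ 3^q := pow_le_pow_right₀ (by norm_num) hl
    rw [pow_succ] at this
    nlinarith [pow_pos (by norm_num : (0:ℝ) < 3) p]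
  · have hl' : q < p := lt_of_le_of_ne hl (Ne.symm h)
    have : (3:ℝ)^(q+1) ≤ 3^p := pow_le_pow_right₀ (by norm_num) hl'
    rw [pow_succ] at this
    nlinarith [pow_pos (by norm_num : (0:ℝ) < 3) q]

set_option maxHeartbeats 2000000 in
lemma main_construction (D : Set ℝ) (hD : D ⊆ Set.Icc 0 1) (hnd : IsNowhereDense D)
    (δ ε : ℝ) (hδ : 0 < δ) (hε : 0 < ε) :
    ∃ g : ℝ → ℝ, Continuous g ∧ StrictMonoOn g (Set.Icc 0 1) ∧ g 0 = 0 ∧ g 1 = 1 ∧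
      (∀ t ∈ Set.Icc (0:ℝ) 1, |g t - t| < δ) ∧
      ¬ ∃ x d : ℝ, ε ≤ d ∧ x ∈ g '' D ∧ x + d ∈ g '' D ∧ x + 2 * d ∈ g '' D := by
  classical
  -- choose N
  obtain ⟨N, hNgt⟩ := exists_nat_gt (max 3 (3/δ))
  have hN3 : 3 ≤ N := by
    have := le_max_left 3 (3/δ)
    have h3 : (3:ℝ) < N := lt_of_le_of_lt this hNgt
    exact_mod_cast h3.le
  have hN0 : (0:ℝ) < N := by positivity
  have hNδ : 3 / (N:ℝ) < δ := by
    have h := lt_of_le_of_lt (le_max_right 3 (3/δ)) hNgt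
    rw [div_lt_iff₀ hδ] at h
    rw [div_lt_iff₀ hN0]
    linarith
  have hNR : (3:ℝ) ≤ N := by exact_mod_cast hN3
  have h8 : (0:ℝ) < 1/(8*N) := by positivity
  -- choose partition points a
  have hdense : Dense (closure D)ᶜ := by
    rw [← interior_eq_empty_iff_dense_compl]; exact hnd
  have ha_ex : ∀ i : ℕ, ∃ z, z ∈ Set.Ioo ((i:ℝ)/N) ((i:ℝ)/N + 1/(2*N)) ∧ z ∉ closure D := by
    intro i
    have hne : (Set.Ioo ((i:ℝ)/N) ((i:ℝ)/N + 1/(2*N))).Nonempty := by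
      refine Set.nonempty_Ioo.mpr ?_
      have : (0:ℝ) < 1/(2*N) := by positivity
      linarith
    obtain ⟨z, hz1, hz2⟩ := hdense.inter_open_nonempty _ isOpen_Ioo hne
    exact ⟨z, hz1, hz2⟩
  set a : ℕ → ℝ := fun i => if i = 0 then 0 else if N ≤ i then 1 else Classical.choose (ha_ex i)
    with hadef
  clear_value a
  have ha0 : a 0 = 0 := by simp [hadef]
  have haN : a N = 1 := by simp [hadef]; omega
  have haIoo : ∀ i, 1 ≤ i → i < N →
      a i ∈ Set.Ioo ((i:ℝ)/N) ((i:ℝ)/N + 1/(2*N)) ∧ a i ∉ closure D := by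
    intro i h1 h2
    have : a i = Classical.choose (ha_ex i) := by
      rw [hadef]; simp only []; rw [if_neg (by omega), if_neg (by omega)]
    rw [this]
    exact Classical.choose_spec (ha_ex i)
  have halb : ∀ i, i ≤ N → (i:ℝ)/N ≤ a i := by
    intro i hi
    rcases Nat.eq_zero_or_pos i with rfl | h1
    · rw [ha0]; norm_num
    rcases Nat.lt_or_ge i N with h2 | h2
    · exact le_of_lt (haIoo i h1 h2).1.1
    · have hiN : i = N := le_antisymm hi h2
      rw [hiN, haN, div_self (ne_of_gt hN0)]
  have haub : ∀ i, i ≤ N → a i ≤ (i:ℝ)/N + 1/(2*N) := by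
    intro i hi
    rcases Nat.eq_zero_or_pos i with rfl | h1
    · rw [ha0]; positivity
    rcases Nat.lt_or_ge i N with h2 | h2
    · exact le_of_lt (haIoo i h1 h2).1.2
    · have hiN : i = N := le_antisymm hi h2
      rw [hiN, haN, div_self (ne_of_gt hN0)]
      have : (0:ℝ) < 1/(2*N) := by positivity
      linarith
  have hstep : ∀ i, i + 1 ≤ N → a i + 1/(2*N) ≤ a (i+1) := by
    intro i hi
    have h1 := haub i (by omega)
    have h2 := halb (i+1) hi
    have : ((i+1:ℕ):ℝ)/N = (i:ℝ)/N + 1/N := by push_cast; ring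
    rw [this] at h2
    have : 1/(N:ℝ) = 1/(2*N) + 1/(2*N) := by field_simp; ring
    linarith
  have hstep' : ∀ i, i + 1 ≤ N → a i < a (i+1) := by
    intro i hi
    have := hstep i hi
    have h2N : (0:ℝ) < 1/(2*N) := by positivity
    linarith
  have hamono : ∀ i j, i ≤ j → j ≤ N → a i ≤ a j :=
    step_mono (fun j hj => hstep' j hj)
  have hgap2 : ∀ i, i + 2 ≤ N → a (i+2) - a i ≤ 3/N := by
    intro i hi
    have h1 := haub (i+2) hi
    have h2 := halb i (by omega)
    have hc : ((i+2:ℕ):ℝ)/N = (i:ℝ)/N + 2/N := by push_cast; ring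
    rw [hc] at h1
    have : 1/(2*(N:ℝ)) ≤ 1/N := by
      rw [div_le_div_iff₀ (by positivity) hN0]; nlinarith
    have h3 : (2:ℝ)/N + 1/N = 3/N := by ring
    linarith
  have hgap1 : ∀ i, i + 1 ≤ N → a (i+1) - a i ≤ 3/N := by
    intro i hi
    have h1 := haub (i+1) hi
    have h2 := halb i (by omega)
    have hc : ((i+1:ℕ):ℝ)/N = (i:ℝ)/N + 1/N := by push_cast; ring
    rw [hc] at h1
    have h12 : 1/(2*(N:ℝ)) ≤ 1/N := by
      rw [div_le_div_iff₀ (by positivity) (by positivity)]; nlinarith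
    have h3N : (3:ℝ)/N = 3*(1/N) := by ring
    have h1N : (0:ℝ) < 1/N := by positivity
    linarith
  have haNm1 : a (N-1) ≤ 1 - 1/(2*N) := by
    have h1 := haub (N-1) (by omega)
    have hc : (((N-1:ℕ)):ℝ)/N = 1 - 1/N := by
      rw [Nat.cast_sub (by omega)]
      push_cast
      field_simp
    rw [hc] at h1
    have : 1/(N:ℝ) = 1/(2*N) + 1/(2*N) := by field_simp; ring
    linarith
  -- radii around interior points
  have halbN1 : 1 - 1/(N:ℝ) ≤ a (N-1) := by
    have h := halb (N-1) (by omega)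
    have hNm : ((N-1:ℕ):ℝ) = (N:ℝ) - 1 := by rw [Nat.cast_sub (by omega)]; norm_num
    rw [hNm] at h
    have hh : ((N:ℝ) - 1)/N = 1 - 1/N := by field_simp
    rw [hh] at h
    exact h
  have hρ_ex : ∀ i : ℕ, ∃ p : ℝ, 0 < p ∧ (1 ≤ i → i < N → ∀ t ∈ D, p ≤ |t - a i|) := by
    intro i
    rcases Nat.lt_or_ge i N with h2 | h2
    · rcases Nat.eq_zero_or_pos i with rfl | h1
      · exact ⟨1, by norm_num, by omega⟩
      · have hni := (haIoo i h1 h2).2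
        have hopen : IsOpen (closure D)ᶜ := isOpen_compl_iff.mpr isClosed_closure
        obtain ⟨p, hp, hball⟩ := Metric.isOpen_iff.mp hopen (a i) hni
        refine ⟨p, hp, fun _ _ t ht => ?_⟩
        by_contra hc
        push_neg at hc
        have : t ∈ Metric.ball (a i) p := by
          rw [Metric.mem_ball, Real.dist_eq]; exact hc
        exact (hball this) (subset_closure ht)
    · exact ⟨1, by norm_num, by omega⟩
  set ρ : ℕ → ℝ := fun i => Classical.choose (hρ_ex i) with hρdef
  clear_value ρ
  have hρpos : ∀ i, 0 < ρ i := by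
    intro i; rw [hρdef]; exact (Classical.choose_spec (hρ_ex i)).1
  have hρ : ∀ i, 1 ≤ i → i < N → ∀ t ∈ D, ρ i ≤ |t - a i| := by
    intro i; rw [hρdef]; exact (Classical.choose_spec (hρ_ex i)).2
  -- r
  have hIcc1ne : (Finset.Icc 1 (N-1)).Nonempty := ⟨1, by simp; omega⟩
  set r : ℝ := min (1/(8*N)) ((Finset.Icc 1 (N-1)).inf' hIcc1ne (fun i => ρ i / 2)) with hrdef
  clear_value r
  have hr0 : 0 < r := by
    rw [hrdef]
    apply lt_min h8
    rw [Finset.lt_inf'_iff]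
    intro i _
    have := hρpos i; linarith
  have hr8 : r ≤ 1/(8*N) := by rw [hrdef]; exact min_le_left _ _
  have hrρ : ∀ i, 1 ≤ i → i < N → r ≤ ρ i / 2 := by
    intro i h1 h2
    rw [hrdef]
    refine le_trans (min_le_right _ _) (Finset.inf'_le _ ?_)
    simp only [Finset.mem_Icc]; omega
  -- centers
  set A : ℕ → ℝ := fun i => if i = 0 then 0 else if N - 1 ≤ i then 1 else (a i + a (i+1))/2
    with hAdef
  clear_value A
  set w : ℕ → ℝ := fun i => if i = 0 then 0 else if N - 1 ≤ i then 0 else (3:ℝ)⁻¹ ^ i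
    with hwdef
  clear_value w
  have hw0 : ∀ i, 0 ≤ w i := by
    intro i; rw [hwdef]; simp only []
    split_ifs <;> positivity
  have hw1 : ∀ i, w i ≤ 1 := by
    intro i; rw [hwdef]; simp only []
    split_ifs with h1 h2
    · norm_num
    · norm_num
    · exact pow_le_one₀ (by norm_num) (by norm_num)
  have hcoef : ∀ j k l : ℕ, j < N → k < N → l < N → j ≠ k → k ≠ l → j ≠ l →
      w j + w l - 2 * w k ≠ 0 := by
    intro j k l hjN hkN hlN hjk hkl hjl
    have hwval : ∀ i, w i = 0 ∨ (w i = (3:ℝ)⁻¹ ^ i ∧ 1 ≤ i ∧ i < N - 1) := by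
      intro i; rw [hwdef]; simp only []
      split_ifs with h1 h2
      · exact Or.inl rfl
      · exact Or.inl rfl
      · exact Or.inr ⟨rfl, by omega, by omega⟩
    have hEcase : ∀ i, i < N → w i = 0 → (i = 0 ∨ i = N - 1) := by
      intro i hiN hwi
      by_contra hc
      push_neg at hc
      have := hwval i
      rcases this with h | h
      · -- need i = 0 or N-1 ≤ i from def
        rw [hwdef] at hwi; simp only [] at hwi
        split_ifs at hwi with h1 h2
        · exact hc.1 h1
        · exact hc.2 (by omega)
        · exact absurd hwi (by positivity)
      · exact absurd hwi (by rw [h.1]; positivity)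
    rcases hwval j with hj | hj <;> rcases hwval k with hk | hk <;> rcases hwval l with hl | hl
    · -- all endpoints: impossible
      have e1 := hEcase j hjN hj
      have e2 := hEcase k hkN hk
      have e3 := hEcase l hlN hl
      omega
    · rw [hj, hk, hl.1]
      intro hc
      have : (0:ℝ) < 3⁻¹ ^ l := by positivity
      linarith
    · rw [hj, hk.1, hl]
      intro hc
      have h2 : (3:ℝ)⁻¹ ^ k ≠ 0 := by positivity
      have : (0:ℝ) < 3⁻¹ ^ k := by positivity
      linarith
    · rw [hj, hk.1, hl.1]
      intro hc
      exact inv3_ne2 l k hkl.symm (by linarith)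
    · rw [hj.1, hk, hl]
      intro hc
      have : (0:ℝ) < 3⁻¹ ^ j := by positivity
      linarith
    · rw [hj.1, hk, hl.1]
      intro hc
      have h1 : (0:ℝ) < 3⁻¹ ^ j := by positivity
      have h2 : (0:ℝ) < 3⁻¹ ^ l := by positivity
      linarith
    · rw [hj.1, hk.1, hl]
      intro hc
      exact inv3_ne2 j k hjk (by linarith)
    · rw [hj.1, hk.1, hl.1]
      intro hc
      exact inv3_ne j k l hjk (hkl.symm) (by linarith)
  set vt : ℝ → ℕ → ℝ := fun t i => A i + t * w i with hvtdef
  clear_value vt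
  set T3 : Finset (ℕ×ℕ×ℕ) := ((Finset.range N) ×ˢ (Finset.range N) ×ˢ (Finset.range N)).filter
      (fun p => p.1 ≠ p.2.1 ∧ p.2.1 ≠ p.2.2 ∧ p.1 ≠ p.2.2) with hT3def
  clear_value T3
  have hT3mem : ∀ p : ℕ×ℕ×ℕ, p ∈ T3 ↔
      (p.1 < N ∧ p.2.1 < N ∧ p.2.2 < N ∧ p.1 ≠ p.2.1 ∧ p.2.1 ≠ p.2.2 ∧ p.1 ≠ p.2.2) := by
    intro p
    rw [hT3def, Finset.mem_filter, Finset.mem_product, Finset.mem_product]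
    simp only [Finset.mem_range]
    tauto
  set B : Set ℝ := {t | ∃ j k l : ℕ, j < N ∧ k < N ∧ l < N ∧ j ≠ k ∧ k ≠ l ∧ j ≠ l ∧
      vt t j + vt t l = 2 * vt t k} with hBdef
  clear_value B
  have hBfin : B.Finite := by
    have hsub : B ⊆ ⋃ p ∈ (T3 : Set (ℕ×ℕ×ℕ)), {t : ℝ | vt t p.1 + vt t p.2.2 = 2 * vt t p.2.1} := by
      intro t ht
      rw [hBdef] at ht
      obtain ⟨j, k, l, h1, h2, h3, h4, h5, h6, h7⟩ := ht
      refine Set.mem_biUnion (show ((j,k,l) : ℕ×ℕ×ℕ) ∈ (T3 : Set (ℕ×ℕ×ℕ)) from ?_) h7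
      rw [Finset.mem_coe, hT3mem]
      exact ⟨h1, h2, h3, h4, h5, h6⟩
    refine Set.Finite.subset (Set.Finite.biUnion T3.finite_toSet ?_) hsub
    rintro ⟨j, k, l⟩ hp
    rw [Finset.mem_coe, hT3mem] at hp
    obtain ⟨h1, h2, h3, h4, h5, h6⟩ := hp
    have hβ := hcoef j k l h1 h2 h3 h4 h5 h6
    refine Set.Finite.subset (Set.finite_singleton ((2 * A k - A j - A l)/(w j + w l - 2 * w k))) ?_
    intro t ht
    simp only [Set.mem_setOf_eq, hvtdef] at ht
    simp only [Set.mem_singleton_iff]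
    field_simp
    linarith [ht]
  obtain ⟨t₀, ht₀⟩ := ((Set.Ioo_infinite h8).diff hBfin).nonempty
  have ht₀I : t₀ ∈ Set.Ioo (0:ℝ) (1/(8*N)) := ht₀.1
  have ht₀B : t₀ ∉ B := ht₀.2
  set v : ℕ → ℝ := vt t₀ with hvdef
  clear_value v
  have hv0 : v 0 = 0 := by
    rw [hvdef, hvtdef]
    show A 0 + t₀ * w 0 = 0
    simp [hAdef, hwdef]
  have hvN : v (N-1) = 1 := by
    rw [hvdef, hvtdef]
    show A (N-1) + t₀ * w (N-1) = 1
    simp only [hAdef, hwdef]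
    rw [if_neg (by omega), if_pos (by omega), if_neg (by omega), if_pos (by omega)]
    ring
  have hvmem : ∀ i, 1 ≤ i → i < N - 1 →
      a i + 1/(8*N) ≤ v i ∧ v i ≤ a (i+1) - 1/(8*N) := by
    intro i h1 h2
    have hA : A i = (a i + a (i+1))/2 := by
      rw [hAdef]; simp only []; rw [if_neg (by omega), if_neg (by omega)]
    have hw : w i = (3:ℝ)⁻¹ ^ i := by
      rw [hwdef]; simp only []; rw [if_neg (by omega), if_neg (by omega)]
    have hv : v i = (a i + a (i+1))/2 + t₀ * (3:ℝ)⁻¹ ^ i := by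
      rw [hvdef, hvtdef]
      show A i + t₀ * w i = _
      rw [hA, hw]
    have hwb : (0:ℝ) < (3:ℝ)⁻¹ ^ i := by positivity
    have hwb1 : (3:ℝ)⁻¹ ^ i ≤ 1 := pow_le_one₀ (by norm_num) (by norm_num)
    have ht1 : 0 < t₀ := ht₀I.1
    have ht2 : t₀ < 1/(8*N) := ht₀I.2
    have htw : 0 ≤ t₀ * (3:ℝ)⁻¹ ^ i := by positivity
    have htw2 : t₀ * (3:ℝ)⁻¹ ^ i ≤ t₀ := mul_le_of_le_one_right (le_of_lt ht1) hwb1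
    have hst := hstep i (by omega)
    have h4N : 1/(2*(N:ℝ)) = 4 * (1/(8*N)) := by field_simp; ring
    rw [hv]
    constructor
    · linarith
    · linarith
  have hvAP : ∀ j k l : ℕ, j < N → k < N → l < N → j ≠ k → k ≠ l → j ≠ l →
      v j + v l ≠ 2 * v k := by
    intro j k l h1 h2 h3 h4 h5 h6 hc
    apply ht₀B
    rw [hBdef]
    rw [hvdef] at hc
    exact ⟨j, k, l, h1, h2, h3, h4, h5, h6, hc⟩
  have hvstep : ∀ i, i + 1 ≤ N - 1 → v i + 1/(8*N) ≤ v (i+1) := by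
    intro i hi
    rcases Nat.eq_zero_or_pos i with rfl | hipos
    · rcases Nat.lt_or_ge 1 (N-1) with h | h
      · have := (hvmem 1 le_rfl h).1
        have := halb 1 (by omega)
        have h1N : 1/(N:ℝ) ≤ (1:ℝ)/1 := by
          apply div_le_div_of_nonneg_left <;> linarith
        have ha1 : (0:ℝ) ≤ a 1 := by
          have hlb := halb 1 (by omega)
          have h0 : ((1:ℕ):ℝ)/N = 1/(N:ℝ) := by norm_num
          have hp : (0:ℝ) < 1/(N:ℝ) := by positivity
          rw [h0] at hlb
          linarith
        rw [hv0]
        linarith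
      · omega
    · rcases Nat.lt_or_ge (i+1) (N-1) with h | h
      · have hm1 := (hvmem i hipos (by omega)).2
        have hm2 := (hvmem (i+1) (by omega) h).1
        linarith
      · have hi1 : i + 1 = N - 1 := by omega
        have hm1 := (hvmem i hipos (by omega)).2
        rw [hi1, hvN]
        have hub := haub (i+1) (by omega)
        have h2N8 : 1/(8*(N:ℝ)) ≤ 1/(2*N) := by
          rw [div_le_div_iff₀ (by positivity) (by positivity)]; nlinarith
        have hi1' : ((i+1:ℕ):ℝ)/N ≤ 1 - 1/N := by
          have hle : (i+1 : ℕ) ≤ N - 1 := by omega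
          have hcast : ((i+1:ℕ):ℝ) ≤ ((N-1:ℕ):ℝ) := by exact_mod_cast hle
          have hNm : (((N-1:ℕ)):ℝ) = (N:ℝ) - 1 := by
            rw [Nat.cast_sub (by omega)]; norm_num
          rw [hNm] at hcast
          rw [div_le_iff₀ hN0]
          have hee : (1 - 1/(N:ℝ)) * N = N - 1 := by field_simp
          rw [hee]
          exact hcast
        have h1N2 : 1/(2*(N:ℝ)) ≤ 1/N := by
          rw [div_le_div_iff₀ (by positivity) (by positivity)]; nlinarith
        linarith
  -- choose η
  have hT3ne : T3.Nonempty := by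
    refine ⟨(0, 1, 2), ?_⟩
    rw [hT3mem]
    show 0 < N ∧ 1 < N ∧ 2 < N ∧ 0 ≠ 1 ∧ 1 ≠ 2 ∧ 0 ≠ 2
    refine ⟨by omega, by omega, by omega, by omega, by omega, by omega⟩
  set Amin : ℝ := T3.inf' hT3ne (fun p => |v p.1 + v p.2.2 - 2 * v p.2.1|) with hAmindef
  clear_value Amin
  have hAmin0 : 0 < Amin := by
    rw [hAmindef, Finset.lt_inf'_iff]
    intro p hp
    rw [hT3mem] at hp
    obtain ⟨h1, h2, h3, h4, h5, h6⟩ := hp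
    exact abs_pos.mpr (sub_ne_zero.mpr (hvAP _ _ _ h1 h2 h3 h4 h5 h6))
  have hAminle : ∀ j k l : ℕ, j < N → k < N → l < N → j ≠ k → k ≠ l → j ≠ l →
      Amin ≤ |v j + v l - 2 * v k| := by
    intro j k l h1 h2 h3 h4 h5 h6
    rw [hAmindef]
    have hmem : ((j,k,l) : ℕ×ℕ×ℕ) ∈ T3 := by
      rw [hT3mem]
      show j < N ∧ k < N ∧ l < N ∧ j ≠ k ∧ k ≠ l ∧ j ≠ l
      exact ⟨h1, h2, h3, h4, h5, h6⟩
    exact Finset.inf'_le _ hmem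
  set η : ℝ := min (ε/3) (min (1/(32*N)) (Amin/8)) with hηdef
  clear_value η
  have hη0 : 0 < η := by
    rw [hηdef]
    exact lt_min (by linarith) (lt_min (by positivity) (by linarith))
  have hηε : 2 * η < ε := by
    have : η ≤ ε/3 := by rw [hηdef]; exact min_le_left _ _
    linarith
  have hηA : 4 * η < Amin := by
    have : η ≤ Amin/8 := by rw [hηdef]; exact le_trans (min_le_right _ _) (min_le_right _ _)
    linarith
  have hη32 : η ≤ 1/(32*N) := by
    rw [hηdef]; exact le_trans (min_le_right _ _) (min_le_left _ _)
  have hη8 : η < 1/(8*N) := by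
    have : 1/(32*(N:ℝ)) < 1/(8*N) := by
      rw [div_lt_div_iff₀ (by positivity) (by positivity)]; nlinarith
    linarith
  have hη16 : 2 * η < 1/(8*N) := by
    have : 2/(32*(N:ℝ)) < 1/(8*N) := by
      rw [div_lt_div_iff₀ (by positivity) (by positivity)]; nlinarith
    have h2 : 2 * η ≤ 2/(32*(N:ℝ)) := by
      rw [div_eq_mul_inv, mul_comm (2:ℝ)]
      have := hη32
      rw [div_eq_mul_inv, one_mul] at this
      nlinarith
    linarith
  -- breakpoints
  set M : ℕ := 2*N - 1 with hMdef
  obtain ⟨x, hx0, hxM', hxval⟩ : ∃ x : ℕ → ℝ, x 0 = 0 ∧ (∀ j, M ≤ j → x j = 1) ∧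
      (∀ j, 0 < j → j < M → x j = a ((j+1)/2) + (if j % 2 = 1 then -r else r)) := by
    refine ⟨fun j => if j = 0 then 0 else if M ≤ j then 1 else
      a ((j+1)/2) + (if j % 2 = 1 then -r else r), rfl, ?_, ?_⟩
    · intro j hj; simp only []; rw [if_neg (by omega), if_pos hj]
    · intro j h1 h2; simp only []; rw [if_neg (by omega), if_neg (by omega)]
  obtain ⟨y, hy0, hyM', hyval⟩ : ∃ y : ℕ → ℝ, y 0 = 0 ∧ (∀ j, M ≤ j → y j = 1) ∧
      (∀ j, 0 < j → j < M → y j = v (j/2) + (if j % 2 = 1 then η else -η)) := by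
    refine ⟨fun j => if j = 0 then 0 else if M ≤ j then 1 else
      v (j/2) + (if j % 2 = 1 then η else -η), rfl, ?_, ?_⟩
    · intro j hj; simp only []; rw [if_neg (by omega), if_pos hj]
    · intro j h1 h2; simp only []; rw [if_neg (by omega), if_neg (by omega)]
  have hxM : x M = 1 := hxM' M le_rfl
  have hyM : y M = 1 := hyM' M le_rfl
  -- auxiliary facts
  have ha1lb : 1/(N:ℝ) ≤ a 1 := by
    have := halb 1 (by omega)
    simpa using this
  have hr2N : r < 1/(2*N) := by
    have : 1/(8*(N:ℝ)) < 1/(2*N) := by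
      rw [div_lt_div_iff₀ (by positivity) (by positivity)]; nlinarith
    linarith
  have hx_step : ∀ j, j < M → x j < x (j+1) := by
    intro j hj
    rcases Nat.eq_zero_or_pos j with rfl | hjpos
    · rw [hx0, hxval 1 (by omega) (by omega)]
      have : (1+1)/2 = 1 := by norm_num
      rw [this]
      simp only [Nat.mod_self]
      norm_num
      have h1N8 : 1/(8*(N:ℝ)) < 1/N := by
        rw [div_lt_div_iff₀ (by positivity) (by positivity)]; nlinarith
      linarith
    rcases Nat.lt_or_ge (j+1) M with hj1 | hj1
    · rw [hxval j hjpos hj, hxval (j+1) (by omega) hj1]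
      rcases Nat.even_or_odd j with he | ho
      · -- j even, j+1 odd
        have hm0 : j % 2 = 0 := Nat.even_iff.mp he
        have hm1 : (j+1) % 2 = 1 := by omega
        rw [if_neg (by omega), if_pos hm1]
        have hidx : (j+1+1)/2 = (j+1)/2 + 1 := by omega
        rw [hidx]
        have hii : (j+1)/2 + 1 ≤ N := by omega
        have := hstep ((j+1)/2) hii
        have h2r : 2*r < 1/(2*N) := by
          have : 2*r ≤ 2/(8*(N:ℝ)) := by
            have := hr8
            rw [div_eq_mul_inv] at *
            nlinarith
          have h28 : 2/(8*(N:ℝ)) < 1/(2*N) := by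
            rw [div_lt_div_iff₀ (by positivity) (by positivity)]; nlinarith
          linarith
        linarith
      · -- j odd, j+1 even
        have hm1 : j % 2 = 1 := Nat.odd_iff.mp ho
        rw [if_pos hm1, if_neg (by omega)]
        have hidx : (j+1+1)/2 = (j+1)/2 := by omega
        rw [hidx]
        linarith
    · -- j+1 = M
      have hjM : j = M - 1 := by omega
      rw [hxval j hjpos hj, hxM' (j+1) (by omega)]
      have hm0 : j % 2 = 0 := by omega
      have hidx : (j+1)/2 = N - 1 := by omega
      rw [if_neg (by omega), hidx]
      linarith [haNm1, hr2N]
  have hy_step : ∀ j, j < M → y j < y (j+1) := by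
    intro j hj
    rcases Nat.eq_zero_or_pos j with rfl | hjpos
    · rw [hy0, hyval 1 (by omega) (by omega)]
      have h12 : (1:ℕ)/2 = 0 := by norm_num
      have hm : (1:ℕ) % 2 = 1 := by norm_num
      rw [h12, hm, hv0, if_pos rfl]
      linarith
    rcases Nat.lt_or_ge (j+1) M with hj1 | hj1
    · rw [hyval j hjpos hj, hyval (j+1) (by omega) hj1]
      rcases Nat.even_or_odd j with he | ho
      · -- j even: v (j/2) - η < v (j/2) + η
        have hm0 : j % 2 = 0 := Nat.even_iff.mp he
        have hm1 : (j+1) % 2 = 1 := by omega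
        rw [if_neg (by omega), if_pos hm1]
        have hidx : (j+1)/2 = j/2 := by omega
        rw [hidx]
        linarith
      · -- j odd: v i + η < v (i+1) - η with i = j/2
        have hm1 : j % 2 = 1 := Nat.odd_iff.mp ho
        rw [if_pos hm1, if_neg (by omega)]
        have hidx : (j+1)/2 = j/2 + 1 := by omega
        rw [hidx]
        have hii : j/2 + 1 ≤ N - 1 := by omega
        have := hvstep (j/2) hii
        linarith [hη16]
    · -- j+1 = M, j = M-1 = 2N-2 even
      rw [hyval j hjpos hj, hyM' (j+1) (by omega)]
      have hm0 : j % 2 = 0 := by omega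
      have hidx : j/2 = N - 1 := by omega
      rw [if_neg (by omega), hidx, hvN]
      linarith
  -- build g
  obtain ⟨g, hgc, hgm, hgsm, hgval⟩ := pl_exists M x y hx_step hy_step
  have hg0 : g 0 = 0 := by
    have h := hgval 0 (by omega)
    rw [hx0] at h; rw [h, hy0]
  have hg1 : g 1 = 1 := by
    have h := hgval M le_rfl
    rw [hxM] at h; rw [h, hyM]
  rw [hx0, hxM] at hgsm
  have hpiece : ∀ k, k < M → ∀ u, x k ≤ u → u ≤ x (k+1) → y k ≤ g u ∧ g u ≤ y (k+1) := by
    intro k hk u h1 h2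
    constructor
    · rw [← hgval k (le_of_lt hk)]; exact hgm h1
    · rw [← hgval (k+1) hk]; exact hgm h2
  have h2N3N : 1/(2*(N:ℝ)) ≤ 3/N := by
    rw [div_le_div_iff₀ (by positivity) (by positivity)]; nlinarith
  -- closeness
  have hclose : ∀ t ∈ Set.Icc (0:ℝ) 1, |g t - t| < δ := by
    intro t ht
    rcases eq_or_lt_of_le ht.2 with h1 | h1
    · rw [h1, hg1]; simpa using hδ
    · obtain ⟨k, hkM, hk1, hk2⟩ := exists_piece hx_step (hx0.le.trans ht.1)
        (lt_of_lt_of_le h1 hxM.ge)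
      obtain ⟨hgl, hgu⟩ := hpiece k hkM t hk1 (le_of_lt hk2)
      obtain ⟨L, U, hUL, hLx, hxU, hLy, hyU⟩ : ∃ L U : ℝ, U - L ≤ 3/N ∧ L ≤ x k ∧
          x (k+1) ≤ U ∧ L ≤ y k ∧ y (k+1) ≤ U := by
        rcases Nat.eq_zero_or_pos k with rfl | hkpos
        · -- k = 0
          have hx1 : x 1 = a 1 - r := by
            rw [hxval 1 (by omega) (by omega)]
            have e1 : (1+1)/2 = 1 := by norm_num
            have e2 : (1:ℕ) % 2 = 1 := by norm_num
            rw [e1, e2, if_pos rfl]; ring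
          have hy1 : y 1 = η := by
            rw [hyval 1 (by omega) (by omega)]
            have e1 : (1:ℕ)/2 = 0 := by norm_num
            have e2 : (1:ℕ) % 2 = 1 := by norm_num
            rw [e1, e2, hv0, if_pos rfl]; ring
          refine ⟨0, a 1, ?_, le_of_eq hx0.symm, ?_, le_of_eq hy0.symm, ?_⟩
          · have := hgap1 0 (by omega)
            rw [ha0] at this; linarith
          · rw [hx1]; linarith
          · rw [hy1]
            have h81 : 1/(8*(N:ℝ)) < 1/N := by
              rw [div_lt_div_iff₀ (by positivity) (by positivity)]; nlinarith
            linarith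
        · rcases Nat.lt_or_ge (k+1) M with hk1M | hk1M
          · have hxk := hxval k hkpos hkM
            have hxk1 := hxval (k+1) (by omega) hk1M
            have hyk := hyval k hkpos hkM
            have hyk1 := hyval (k+1) (by omega) hk1M
            rcases Nat.even_or_odd k with he | ho
            · -- k even middle
              have hm0 : k % 2 = 0 := Nat.even_iff.mp he
              rw [if_neg (by omega)] at hxk hyk
              rw [if_pos (by omega)] at hxk1 hyk1
              have e1 : (k+1)/2 = k/2 := by omega
              have e2 : (k+1+1)/2 = k/2 + 1 := by omega
              rw [e1] at hxk hyk1
              rw [e2] at hxk1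
              have hk2le : 1 ≤ k/2 := by omega
              have hk2lt : k/2 < N - 1 := by omega
              obtain ⟨hvl, hvu⟩ := hvmem (k/2) hk2le hk2lt
              refine ⟨a (k/2), a (k/2 + 1), hgap1 (k/2) (by omega), ?_, ?_, ?_, ?_⟩
              · rw [hxk]; linarith
              · rw [hxk1]; linarith
              · rw [hyk]; linarith
              · rw [hyk1]; linarith
            · -- k odd middle
              have hm1 : k % 2 = 1 := Nat.odd_iff.mp ho
              rw [if_pos hm1] at hxk
              rw [if_pos hm1] at hyk
              rw [if_neg (by omega)] at hxk1 hyk1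
              have e1 : (k+1)/2 = k/2 + 1 := by omega
              have e2 : (k+1+1)/2 = k/2 + 1 := by omega
              rw [e1] at hxk hyk1
              rw [e2] at hxk1
              have hk2n : k/2 + 2 ≤ N := by omega
              refine ⟨a (k/2), a (k/2 + 2), hgap2 (k/2) hk2n, ?_, ?_, ?_, ?_⟩
              · rw [hxk]
                have := hstep (k/2) (by omega)
                linarith [hr2N]
              · rw [hxk1]
                have := hstep (k/2 + 1) (by omega)
                linarith [hr2N]
              · rw [hyk]
                rcases Nat.eq_zero_or_pos (k/2) with hz | hpos
                · rw [hz, hv0, ha0]; linarith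
                · obtain ⟨hvl, _⟩ := hvmem (k/2) hpos (by omega)
                  linarith
              · rw [hyk1]
                rcases Nat.lt_or_ge (k/2 + 1) (N-1) with hlt | hge
                · obtain ⟨_, hvu⟩ := hvmem (k/2 + 1) (by omega) hlt
                  linarith
                · have hEq : k/2 + 1 = N - 1 := by omega
                  have hEq2 : k/2 + 2 = N := by omega
                  rw [hEq, hvN, hEq2, haN]
                  linarith
          · -- k = M - 1
            have hxk := hxval k hkpos hkM
            have hyk := hyval k hkpos hkM
            have hm0 : k % 2 = 0 := by omega
            rw [if_neg (by omega)] at hxk hyk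
            have e1 : (k+1)/2 = N - 1 := by omega
            have e2 : k/2 = N - 1 := by omega
            rw [e1] at hxk
            rw [e2, hvN] at hyk
            have hx1 : x (k+1) = 1 := hxM' (k+1) (by omega)
            have hy1 : y (k+1) = 1 := hyM' (k+1) (by omega)
            refine ⟨a (N-1), 1, ?_, ?_, ?_, ?_, ?_⟩
            · have h1N3 : 1/(N:ℝ) ≤ 3/N := by
                rw [div_le_div_iff₀ (by positivity) (by positivity)]; nlinarith
              linarith [halbN1]
            · rw [hxk]; linarith
            · rw [hx1]
            · rw [hyk]
              have h82 : 1/(8*(N:ℝ)) < 1/(2*N) := by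
                rw [div_lt_div_iff₀ (by positivity) (by positivity)]; nlinarith
              linarith [haNm1]
            · rw [hy1]
      have habs : |g t - t| ≤ U - L := by
        rw [abs_le]
        constructor <;> linarith
      linarith
  -- image containment
  have himg : ∀ t ∈ D, ∃ i, i < N ∧ |g t - v i| ≤ η := by
    intro t ht
    have htI := hD ht
    rcases eq_or_lt_of_le htI.2 with h1 | h1
    · refine ⟨N-1, by omega, ?_⟩
      rw [h1, hg1, hvN]
      simpa using le_of_lt hη0
    · obtain ⟨k, hkM, hk1, hk2⟩ := exists_piece hx_step (hx0.le.trans htI.1)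
        (lt_of_lt_of_le h1 hxM.ge)
      obtain ⟨hgl, hgu⟩ := hpiece k hkM t hk1 (le_of_lt hk2)
      have hkeven : k % 2 = 0 := by
        by_contra hodd
        have hm1 : k % 2 = 1 := by omega
        have hkpos : 0 < k := by omega
        have hk1M : k + 1 < M := by omega
        have hxk := hxval k hkpos hkM
        have hxk1 := hxval (k+1) (by omega) hk1M
        rw [if_pos hm1] at hxk
        rw [if_neg (by omega)] at hxk1
        have hidx : (k+1+1)/2 = (k+1)/2 := by omega
        rw [hidx] at hxk1
        have hi1 : 1 ≤ (k+1)/2 := by omega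
        have hi2 : (k+1)/2 < N := by omega
        have hrr := hρ ((k+1)/2) hi1 hi2 t ht
        have habs : |t - a ((k+1)/2)| ≤ r := by
          rw [abs_le]
          constructor
          · linarith [hk1, hxk]
          · linarith [hk2, hxk1]
        have h1' := hrρ ((k+1)/2) hi1 hi2
        have h2' := hρpos ((k+1)/2)
        linarith
      rcases Nat.eq_zero_or_pos k with rfl | hkpos
      · refine ⟨0, by omega, ?_⟩
        rw [hv0, sub_zero]
        have hy1 : y 1 = η := by
          rw [hyval 1 (by omega) (by omega)]
          have e1 : (1:ℕ)/2 = 0 := by norm_num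
          have e2 : (1:ℕ) % 2 = 1 := by norm_num
          rw [e1, e2, hv0, if_pos rfl]; ring
        rw [abs_le]
        constructor
        · rw [hy0] at hgl; linarith
        · rw [hy1] at hgu; linarith
      · rcases Nat.lt_or_ge (k+1) M with hk1M | hk1M
        · refine ⟨k/2, by omega, ?_⟩
          have hyk := hyval k hkpos hkM
          have hyk1 := hyval (k+1) (by omega) hk1M
          rw [if_neg (by omega)] at hyk
          rw [if_pos (by omega)] at hyk1
          have hidx : (k+1)/2 = k/2 := by omega
          rw [hidx] at hyk1
          rw [abs_le]
          constructor
          · rw [hyk] at hgl; linarith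
          · rw [hyk1] at hgu; linarith
        · refine ⟨N-1, by omega, ?_⟩
          rw [hvN]
          have hyk := hyval k hkpos hkM
          rw [if_neg (by omega)] at hyk
          have hidx : k/2 = N-1 := by omega
          rw [hidx, hvN] at hyk
          have hy1 : y (k+1) = 1 := hyM' (k+1) (by omega)
          rw [abs_le]
          constructor
          · rw [hyk] at hgl; linarith
          · rw [hy1] at hgu; linarith
  -- no 3-AP
  have hnoAP : ¬ ∃ p d : ℝ, ε ≤ d ∧ p ∈ g '' D ∧ p + d ∈ g '' D ∧ p + 2 * d ∈ g '' D := by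
    rintro ⟨p, d, hd, ⟨t1, ht1, he1⟩, ⟨t2, ht2, he2⟩, ⟨t3, ht3, he3⟩⟩
    obtain ⟨i1, hi1N, hb1⟩ := himg t1 ht1
    obtain ⟨i2, hi2N, hb2⟩ := himg t2 ht2
    obtain ⟨i3, hi3N, hb3⟩ := himg t3 ht3
    rw [he1] at hb1; rw [he2] at hb2; rw [he3] at hb3
    have hab1 := abs_le.mp hb1
    have hab2 := abs_le.mp hb2
    have hab3 := abs_le.mp hb3
    have hd0 : 0 < d := lt_of_lt_of_le hε hd
    have hv12 : v i1 < v i2 := by linarith [hηε]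
    have hv23 : v i2 < v i3 := by linarith [hηε]
    have hv13 : v i1 < v i3 := by linarith [hηε]
    have h12 : i1 ≠ i2 := fun h => by rw [h] at hv12; exact lt_irrefl _ hv12
    have h23 : i2 ≠ i3 := fun h => by rw [h] at hv23; exact lt_irrefl _ hv23
    have h13 : i1 ≠ i3 := fun h => by rw [h] at hv13; exact lt_irrefl _ hv13
    have hA := hAminle i1 i2 i3 hi1N hi2N hi3N h12 h23 h13
    have hquad : |v i1 + v i3 - 2 * v i2| ≤ 4*η := by
      rw [abs_le]
      constructor <;> linarith
    linarith [hηA]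
  exact ⟨g, hgc, hgsm, hg0, hg1, hclose, hnoAP⟩


noncomputable section

/-- For nowhere dense `C ⊆ [0,1]` and any `ε > 0`, the set `H_ε(C)` is dense in `H⁺`
(with the sup-norm subspace topology). -/
theorem Heps_dense (C : Set ℝ) (hC : C ⊆ Set.Icc 0 1) (hnd : IsNowhereDense C)
    (ε : ℝ) (hε : 0 < ε) : Dense (Heps C ε) := by
  rw [Metric.dense_iff]
  intro φ' ρ' hρ'
  obtain ⟨φ, hφeq, hφmono, hφ0, hφ1⟩ : ∃ φ : C(Set.Icc (0:ℝ) 1, ℝ), φ = φ'.1 ∧ StrictMono φ ∧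
      φ ⟨0, by norm_num⟩ = 0 ∧ φ ⟨1, by norm_num⟩ = 1 := ⟨φ'.1, rfl, φ'.2.1, φ'.2.2.1, φ'.2.2.2⟩
  -- range of φ
  have hle01 : (⟨0, by norm_num⟩ : Set.Icc (0:ℝ) 1) ≤ ⟨1, by norm_num⟩ := by
    rw [Subtype.mk_le_mk]; norm_num
  have hrange : ∀ p : Set.Icc (0:ℝ) 1, φ p ∈ Set.Icc (0:ℝ) 1 := by
    intro p
    constructor
    · have h := hφmono.monotone (show (⟨0, by norm_num⟩ : Set.Icc (0:ℝ) 1) ≤ p from by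
        rw [Subtype.mk_le_mk]; exact p.2.1)
      rw [hφ0] at h
      exact h
    · have h := hφmono.monotone (show p ≤ (⟨1, by norm_num⟩ : Set.Icc (0:ℝ) 1) from by
        rw [Subtype.mk_le_mk]; exact p.2.2)
      rw [hφ1] at h
      exact h
  have hconn : PreconnectedSpace (Set.Icc (0:ℝ) 1) :=
    Subtype.preconnectedSpace (isPreconnected_Icc)
  have hsurj : ∀ z : Set.Icc (0:ℝ) 1, ∃ p, φ p = (z : ℝ) := by
    intro z
    have h := intermediate_value_univ (⟨0, by norm_num⟩ : Set.Icc (0:ℝ) 1)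
      (⟨1, by norm_num⟩ : Set.Icc (0:ℝ) 1) φ.continuous
    rw [hφ0, hφ1] at h
    exact h z.2
  -- homeomorphism
  set f : Set.Icc (0:ℝ) 1 → Set.Icc (0:ℝ) 1 := fun p => ⟨φ p, hrange p⟩ with hfdef
  have hfinj : Function.Injective f := by
    intro p q hpq
    apply hφmono.injective
    have := congrArg Subtype.val hpq
    exact this
  have hfsurj : Function.Surjective f := by
    intro z
    obtain ⟨p, hp⟩ := hsurj z
    exact ⟨p, Subtype.ext hp⟩
  have hfcont : Continuous f := Continuous.subtype_mk φ.continuous _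
  set e : Set.Icc (0:ℝ) 1 ≃ Set.Icc (0:ℝ) 1 := Equiv.ofBijective f ⟨hfinj, hfsurj⟩ with hedef
  have hecont : Continuous ⇑e := hfcont
  set h : Set.Icc (0:ℝ) 1 ≃ₜ Set.Icc (0:ℝ) 1 := Continuous.homeoOfEquivCompactToT2 hecont
    with hhdef
  -- D = image of C
  set D : Set ℝ := imgC φ C with hDdef
  have hDsub : D ⊆ Set.Icc 0 1 := by
    rw [hDdef]
    rintro _ ⟨p, _, rfl⟩
    exact hrange p
  have hDnd : IsNowhereDense D := by
    have h1 : IsNowhereDense ((Subtype.val : Set.Icc (0:ℝ) 1 → ℝ) ⁻¹' C) := nd_pre hnd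
    have h2 : IsNowhereDense (⇑h '' (Subtype.val ⁻¹' C)) := nd_homeo h h1
    have h3 := nd_img h2
    have heq : (Subtype.val : Set.Icc (0:ℝ) 1 → ℝ) '' (⇑h '' (Subtype.val ⁻¹' C)) = D := by
      rw [hDdef, Set.image_image]
      rfl
    rw [heq] at h3
    exact h3
  -- main construction
  obtain ⟨g, hgc, hgsm, hg0, hg1, hgclose, hgAP⟩ :=
    main_construction D hDsub hDnd ρ' ε hρ' hε
  set ψ : C(Set.Icc (0:ℝ) 1, ℝ) := ⟨fun p => g (φ p), hgc.comp φ.continuous⟩ with hψdef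
  have hψH : ψ ∈ Hplus := by
    refine ⟨?_, ?_, ?_⟩
    · intro p q hpq
      exact hgsm (hrange p) (hrange q) (hφmono hpq)
    · show g (φ ⟨0, by norm_num⟩) = 0
      rw [hφ0, hg0]
    · show g (φ ⟨1, by norm_num⟩) = 1
      rw [hφ1, hg1]
  have hψimg : imgC ψ C = g '' D := by
    rw [hDdef]
    show (fun p => g (φ p)) '' (Subtype.val ⁻¹' C) = _
    rw [imgC, ← Set.image_image]
  refine ⟨⟨ψ, hψH⟩, Metric.mem_ball.mpr ?_, ?_⟩
  · rw [Subtype.dist_eq]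
    show dist ψ φ'.1 < ρ'
    rw [← hφeq]
    rw [ContinuousMap.dist_lt_iff hρ']
    intro p
    show dist (g (φ p)) (φ p) < ρ'
    rw [Real.dist_eq]
    exact hgclose (φ p) (hrange p)
  · show ¬ ∃ x d : ℝ, ε ≤ d ∧ x ∈ imgC ψ C ∧ x + d ∈ imgC ψ C ∧ x + 2 * d ∈ imgC ψ C
    rw [hψimg]
    exact hgAP
end
end

section
/- Let C ⊆ [0,1] be a compact nowhere dense set, let g : [0,1] → [0,1] be a homeomorphism, and let ε > 0. Assume g(C) contains no 3-term arithmetic progression with step d ≥ ε (no x ∈ ℝ, d ≥ ε with x, x+d, x+2d ∈ g(C)). Then there exists δ > 0 such that for every homeomorphism h : [0,1] → [0,1] with ‖h − g‖ < δ (supremum norm), the set h(C) contains no 3-term arithmetic progression with step d > 2ε. -/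
open Set

noncomputable section

/-- `A ⊆ ℝ` is *RAP* (rich in arithmetic progressions): it contains APs of every length `n ≥ 3`. -/
def RAP (A : Set ℝ) : Prop :=
  ∀ n : ℕ, 3 ≤ n → ∃ x d : ℝ, 0 < d ∧ ∀ k : ℕ, k < n → x + (k : ℝ) * d ∈ A

/-- The image in `ℝ` of a set `S ⊆ [0,1]` under a homeomorphism `φ : [0,1] → [0,1]`. -/
def imgH (φ : Set.Icc (0:ℝ) 1 ≃ₜ Set.Icc (0:ℝ) 1) (S : Set ℝ) : Set ℝ :=
  Subtype.val '' (⇑φ '' (Subtype.val ⁻¹' S))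


/-- Stability lemma: if `C ⊆ [0,1]` is compact nowhere dense and the image `g(C)` under a
homeomorphism `g` of `[0,1]` has no 3-term AP of step `d ≥ ε`, then there is `δ > 0` such
that for every homeomorphism `h` of `[0,1]` with `‖h - g‖ < δ` (sup norm), the image
`h(C)` has no 3-term AP of step `d > 2ε`. -/
theorem no_AP_stable_under_perturbation (C : Set ℝ) (hC : C ⊆ Set.Icc 0 1)
    (hcomp : IsCompact C) (hnd : IsNowhereDense C)
    (g : Set.Icc (0:ℝ) 1 ≃ₜ Set.Icc (0:ℝ) 1) (ε : ℝ) (hε : 0 < ε)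
    (hg : ¬ ∃ x d : ℝ, ε ≤ d ∧ x ∈ imgH g C ∧ x + d ∈ imgH g C ∧ x + 2 * d ∈ imgH g C) :
    ∃ δ > 0, ∀ h : Set.Icc (0:ℝ) 1 ≃ₜ Set.Icc (0:ℝ) 1,
      (∀ x : Set.Icc (0:ℝ) 1, |(h x : ℝ) - (g x : ℝ)| < δ) →
      ¬ ∃ x d : ℝ, 2 * ε < d ∧ x ∈ imgH h C ∧ x + d ∈ imgH h C ∧ x + 2 * d ∈ imgH h C := by
  classical
  by_cases hCe : C = ∅
  · refine ⟨1, one_pos, fun h _ => ?_⟩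
    rintro ⟨x, d, hd, hx, -, -⟩
    simp [imgH, hCe] at hx
  by_cases hε1 : ε ≤ 1
  swap
  · refine ⟨1, one_pos, fun h _ => ?_⟩
    rintro ⟨x, d, hd, hx, -, hx2⟩
    obtain ⟨b, -, rfl⟩ := hx
    obtain ⟨b2, -, hb2⟩ := hx2
    have h1 : (0:ℝ) ≤ (b:ℝ) := b.2.1
    have h2 : ((b:ℝ) + 2 * d) ≤ 1 := hb2 ▸ b2.2.2
    push_neg at hε1
    linarith
  -- main case
  set K := imgH g C with hKdef
  have hCc : IsClosed C := hcomp.isClosed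
  have hpre : IsCompact (Subtype.val ⁻¹' C : Set (Set.Icc (0:ℝ) 1)) := by
    have : IsClosed (Subtype.val ⁻¹' C : Set (Set.Icc (0:ℝ) 1)) :=
      hCc.preimage continuous_subtype_val
    exact this.isCompact
  have hKcomp : IsCompact K := (hpre.image g.continuous).image continuous_subtype_val
  have hKcl : IsClosed K := hKcomp.isClosed
  obtain ⟨c, hc⟩ := Set.nonempty_iff_ne_empty.2 hCe
  have hKne : K.Nonempty := ⟨_, ⟨g ⟨c, hC hc⟩, ⟨⟨c, hC hc⟩, hc, rfl⟩, rfl⟩⟩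
  -- the defect function
  set f : ℝ × ℝ → ℝ := fun p =>
    Metric.infDist p.1 K + Metric.infDist (p.1 + p.2) K + Metric.infDist (p.1 + 2 * p.2) K
    with hfdef
  have hfc : Continuous f := by
    apply Continuous.add
    apply Continuous.add
    · exact (Metric.continuous_infDist_pt K).comp continuous_fst
    · exact (Metric.continuous_infDist_pt K).comp (continuous_fst.add continuous_snd)
    · exact (Metric.continuous_infDist_pt K).comp
        (continuous_fst.add (continuous_const.mul continuous_snd))
  set T : Set (ℝ × ℝ) := Set.Icc 0 1 ×ˢ Set.Icc ε 1 with hTdef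
  have hTcomp : IsCompact T := isCompact_Icc.prod isCompact_Icc
  have hTne : T.Nonempty := ⟨(0, ε), ⟨le_refl _, zero_le_one⟩, le_refl _, hε1⟩
  obtain ⟨p, hpT, hpmin⟩ := hTcomp.exists_isMinOn hTne hfc.continuousOn
  have hfeq : ∀ q : ℝ × ℝ, f q =
      Metric.infDist q.1 K + Metric.infDist (q.1 + q.2) K + Metric.infDist (q.1 + 2 * q.2) K :=
    fun q => rfl
  have hfge : (0:ℝ) ≤ f p := by
    rw [hfeq]
    have a0 := (Metric.infDist_nonneg : (0:ℝ) ≤ Metric.infDist p.1 K)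
    have a1 := (Metric.infDist_nonneg : (0:ℝ) ≤ Metric.infDist (p.1 + p.2) K)
    have a2 := (Metric.infDist_nonneg : (0:ℝ) ≤ Metric.infDist (p.1 + 2 * p.2) K)
    linarith
  have hfp : 0 < f p := by
    rcases lt_or_eq_of_le hfge with h | h
    · exact h
    exfalso
    have h' := (hfeq p) ▸ h.symm
    have h1 : Metric.infDist p.1 K = 0 ∧ Metric.infDist (p.1 + p.2) K = 0 ∧
        Metric.infDist (p.1 + 2 * p.2) K = 0 := by
      have a0 := (Metric.infDist_nonneg : (0:ℝ) ≤ Metric.infDist p.1 K)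
      have a1 := (Metric.infDist_nonneg : (0:ℝ) ≤ Metric.infDist (p.1 + p.2) K)
      have a2 := (Metric.infDist_nonneg : (0:ℝ) ≤ Metric.infDist (p.1 + 2 * p.2) K)
      refine ⟨by linarith, by linarith, by linarith⟩
    have m0 : p.1 ∈ K := hKcl.closure_subset
      ((Metric.mem_closure_iff_infDist_zero hKne).2 h1.1)
    have m1 : p.1 + p.2 ∈ K := hKcl.closure_subset
      ((Metric.mem_closure_iff_infDist_zero hKne).2 h1.2.1)
    have m2 : p.1 + 2 * p.2 ∈ K := hKcl.closure_subset
      ((Metric.mem_closure_iff_infDist_zero hKne).2 h1.2.2)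
    exact hg ⟨p.1, p.2, hpT.2.1, m0, m1, m2⟩
  refine ⟨f p / 3, by positivity, fun h hhg => ?_⟩
  rintro ⟨x, d, hd, hx, hx1, hx2⟩
  -- extract the witnesses
  obtain ⟨b0, ⟨c0, hc0, hbc0⟩, hb0⟩ := hx
  obtain ⟨b1, ⟨c1, hc1, hbc1⟩, hb1⟩ := hx1
  obtain ⟨b2, ⟨c2, hc2, hbc2⟩, hb2⟩ := hx2
  have key : ∀ (b : Set.Icc (0:ℝ) 1) (cc : Set.Icc (0:ℝ) 1), cc ∈ Subtype.val ⁻¹' C →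
      h cc = b → Metric.infDist (b:ℝ) K < f p / 3 := by
    intro b cc hcc hb
    have hmem : ((g cc : Set.Icc (0:ℝ) 1) : ℝ) ∈ K := ⟨g cc, ⟨cc, hcc, rfl⟩, rfl⟩
    calc Metric.infDist (b:ℝ) K ≤ dist (b:ℝ) ((g cc : Set.Icc (0:ℝ) 1) : ℝ) :=
          Metric.infDist_le_dist_of_mem hmem
      _ < f p / 3 := by
          rw [Real.dist_eq, ← hb]
          exact hhg cc
  have k0 := key b0 c0 hc0 hbc0
  have k1 := key b1 c1 hc1 hbc1
  have k2 := key b2 c2 hc2 hbc2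
  -- (x,d) ∈ T
  have hxd : (x, d) ∈ T := by
    constructor
    · exact hb0 ▸ b0.2
    · constructor
      · linarith
      · have h1 : (0:ℝ) ≤ x := (hb0 ▸ b0.2 : x ∈ Set.Icc (0:ℝ) 1).1
        have h2 : x + 2 * d ≤ 1 := (hb2 ▸ b2.2 : x + 2 * d ∈ Set.Icc (0:ℝ) 1).2
        linarith
  have hle : f p ≤ f (x, d) := hpmin hxd
  have : f (x, d) < f p := by
    have e0 : Metric.infDist x K < f p / 3 := hb0 ▸ k0
    have e1 : Metric.infDist (x + d) K < f p / 3 := hb1 ▸ k1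
    have e2 : Metric.infDist (x + 2 * d) K < f p / 3 := hb2 ▸ k2
    have hr : f (x, d) =
        Metric.infDist x K + Metric.infDist (x + d) K + Metric.infDist (x + 2 * d) K := rfl
    rw [hr]
    set A0 := Metric.infDist x K
    set A1 := Metric.infDist (x + d) K
    set A2 := Metric.infDist (x + 2 * d) K
    set B := f p
    clear_value A0 A1 A2 B
    linarith
  linarith
end
end

section
/- Every finite set F ⊂ ℝ is universal for the class of sets residual in some interval of positive length: if X ⊆ ℝ is an interval with more than one point and S ⊆ ℝ is such that X \ S is meager, then there exist a > 0 and b ∈ ℝ such that a·F + b ⊆ S. -/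
open Set

noncomputable section

/-- Every finite set `F ⊂ ℝ` is universal for the class of sets residual in some interval
of positive length: some positive affine image `a•F + b` of `F` is contained in `S`. -/
theorem finite_universal_for_residual (F X S : Set ℝ) (hF : F.Finite)
    (hX : X.OrdConnected) (hXnt : X.Nontrivial) (hres : IsMeagre (X \ S)) :
    ∃ a b : ℝ, 0 < a ∧ ∀ x ∈ F, a * x + b ∈ S := by
  rcases F.eq_empty_or_nonempty with hFe | hFne
  · exact ⟨1, 0, one_pos, by simp [hFe]⟩
  obtain ⟨p, hp, q, hq, hpq⟩ := hXnt
  wlog huv : p < q generalizing p q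
  · exact this q hq p hp hpq.symm (lt_of_le_of_ne (not_lt.mp huv) hpq.symm)
  set u := p
  set v := q
  have hI : Ioo u v ⊆ X := fun z hz => hX.out hp hq ⟨hz.1.le, hz.2.le⟩
  -- bounds on F
  have hbddA : BddAbove F := hF.bddAbove
  have hbddB : BddBelow F := hF.bddBelow
  set L := sSup F
  set l := sInf F
  have hle : ∀ x ∈ F, l ≤ x ∧ x ≤ L := fun x hx => ⟨csInf_le hbddB hx, le_csSup hbddA hx⟩
  have hlL : l ≤ L := by
    obtain ⟨x, hx⟩ := hFne
    exact (hle x hx).1.trans (hle x hx).2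
  set a := (v - u) / (2 * (L - l + 1)) with ha_def
  have hvu : 0 < v - u := sub_pos.mpr huv
  have hden : 0 < 2 * (L - l + 1) := by nlinarith
  have ha : 0 < a := div_pos hvu hden
  have hgap : a * (L - l) < v - u := by
    rw [ha_def, div_mul_eq_mul_div, div_lt_iff₀ hden]
    nlinarith
  -- the meagre set
  set M := Ioo u v \ S with hM_def
  have hMm : IsMeagre M := hres.mono (fun z hz => (⟨hI hz.1, hz.2⟩ : z ∈ X ∧ z ∉ S))
  -- residual good set of translations
  have hresid : (⋂ x ∈ F, (fun b : ℝ => a * x + b) ⁻¹' Mᶜ) ∈ residual ℝ := by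
    rw [Filter.biInter_mem hF]
    intro x _
    exact (hMm.preimage_of_isOpenMap (continuous_const.add continuous_id)
      (isOpenMap_add_left (a * x)))
  have hdense := dense_of_mem_residual hresid
  have hJopen : IsOpen (Ioo (u - a * l) (v - a * L)) := isOpen_Ioo
  have hJne : (Ioo (u - a * l) (v - a * L)).Nonempty := by
    rw [nonempty_Ioo]
    nlinarith [hgap]
  obtain ⟨b, hbR, hbJ⟩ := hdense.exists_mem_open hJopen hJne
  refine ⟨a, b, ha, fun x hx => ?_⟩
  have hxl := (hle x hx).1
  have hxL := (hle x hx).2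
  have hmem : a * x + b ∈ Ioo u v := by
    constructor
    · nlinarith [hbJ.1]
    · nlinarith [hbJ.2]
  have hnot : a * x + b ∈ Mᶜ := by
    have := mem_iInter₂.mp hbR x hx
    exact this
  by_contra hS
  exact hnot ⟨hmem, hS⟩
end
end

section
/- Every bounded countable set F ⊂ ℝ is universal for the class of sets residual in some interval of positive length: if F ⊂ ℝ is countable and bounded, X ⊆ ℝ is an interval with more than one point, and S ⊆ ℝ is such that X \ S is meager, then there exist a > 0 and b ∈ ℝ such that a·F + b ⊆ S. -/
open Set

noncomputable section

/-- Every bounded countable set `F ⊂ ℝ` is universal for the class of sets residual in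
some interval of positive length: some positive affine image `a•F + b` of `F` is
contained in `S`. -/
theorem bounded_countable_universal_for_residual (F X S : Set ℝ) (hFc : F.Countable)
    (hFb : Bornology.IsBounded F) (hX : X.OrdConnected) (hXnt : X.Nontrivial)
    (hres : IsMeagre (X \ S)) :
    ∃ a b : ℝ, 0 < a ∧ ∀ x ∈ F, a * x + b ∈ S := by
  -- get a bound M > 0 with |x| ≤ M on F
  have hbd := hFb.bddBelow
  have hab := hFb.bddAbove
  obtain ⟨M₀, hM₀⟩ := hab
  obtain ⟨m₀, hm₀⟩ := hbd
  set M : ℝ := max 1 (max |M₀| |m₀|) with hM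
  have hMpos : (0:ℝ) < M := lt_of_lt_of_le one_pos (le_max_left _ _)
  have hbound : ∀ x ∈ F, |x| ≤ M := by
    intro x hx
    rw [abs_le]
    have h1 := hm₀ hx
    have h2 := hM₀ hx
    have e1 : -|m₀| ≤ x := le_trans (neg_abs_le m₀) h1
    have e2 : x ≤ |M₀| := le_trans h2 (le_abs_self M₀)
    constructor
    · have : |m₀| ≤ M := le_trans (le_max_right _ _) (le_max_right _ _)
      linarith
    · have : |M₀| ≤ M := le_trans (le_max_left _ _) (le_max_right _ _)
      linarith
  -- get c < d in X
  obtain ⟨c₀, hc₀, d₀, hd₀, hne⟩ := hXnt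
  set c : ℝ := min c₀ d₀ with hcdef
  set d : ℝ := max c₀ d₀ with hddef
  have hcX : c ∈ X := by rcases min_cases c₀ d₀ with ⟨h, _⟩ | ⟨h, _⟩ <;> rw [hcdef, h] <;> assumption
  have hdX : d ∈ X := by rcases max_cases c₀ d₀ with ⟨h, _⟩ | ⟨h, _⟩ <;> rw [hddef, h] <;> assumption
  have hcd : c < d := by
    rcases lt_or_gt_of_ne hne with h | h
    · simp [hcdef, hddef, min_eq_left h.le, max_eq_right h.le, h]
    · simp [hcdef, hddef, min_eq_right h.le, max_eq_left h.le, h]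
  have hIcc : Icc c d ⊆ X := hX.out hcX hdX
  -- choose scale a
  set a : ℝ := (d - c) / (4 * M) with ha
  have hapos : 0 < a := div_pos (by linarith) (by linarith)
  have haM : a * M = (d - c) / 4 := by
    field_simp [ha]
    rw [ha, div_mul_eq_mul_div, div_mul_eq_mul_div, div_eq_iff (mul_pos four_pos hMpos).ne']
    ring
  -- the good set of translations
  have hgood : (⋂ x ∈ F, {b : ℝ | a * x + b ∉ X \ S}) ∈ residual ℝ := by
    refine (countable_bInter_mem hFc).mpr fun x hx => ?_
    have h1 : (X \ S)ᶜ ∈ residual ℝ := hres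
    have h2 := (Homeomorph.addLeft (a * x)).residual_map_eq
    have : (X \ S)ᶜ ∈ (residual ℝ).map (Homeomorph.addLeft (a * x)) := h2.symm ▸ h1
    rw [Filter.mem_map] at this
    exact this
  have hdense : Dense (⋂ x ∈ F, {b : ℝ | a * x + b ∉ X \ S}) := dense_of_mem_residual hgood
  -- pick b in the open interval
  have hIoo : ((c + d) / 2 : ℝ) ∈ Ioo (c + (d - c) / 4) (d - (d - c) / 4) := by
    exact ⟨by linarith, by linarith⟩
  obtain ⟨b, hbG, hbI⟩ := hdense.exists_mem_open isOpen_Ioo ⟨_, hIoo⟩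
  refine ⟨a, b, hapos, fun x hx => ?_⟩
  have hxb : |a * x| ≤ (d - c) / 4 := by
    rw [abs_mul, abs_of_pos hapos]
    calc a * |x| ≤ a * M := by
          exact mul_le_mul_of_nonneg_left (hbound x hx) hapos.le
      _ = (d - c) / 4 := haM
  have hmem : a * x + b ∈ Icc c d := by
    rw [abs_le] at hxb
    obtain ⟨hb1, hb2⟩ := hbI
    constructor <;> linarith
  have hnotin : a * x + b ∉ X \ S := by
    have := mem_iInter₂.mp hbG x hx
    exact this
  have hXmem : a * x + b ∈ X := hIcc hmem
  by_contra hns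
  exact hnotin ⟨hXmem, hns⟩
end
end
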